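/- arXiv:1705.02303 — 6 statements merged into one kernel-verified Lean document; each statement's English description precedes it below -/
import Mathlib

section
/- Saddle-point / robust feasibility (Propositions 2 and 3 combined): Let N_a ≥ 1, σ_w > 0, γ_w > 0, and let Q be an N_a×N_a complex Hermitian positive semidefinite matrix and c ≥ 0 a real number. Then the following are equivalent: (i) D(W, Q) ≤ c for every N_a×N_a complex Hermitian positive semidefinite matrix W with γ_w·1 − W positive semidefinite; (ii) D(γ_w·1, Q) ≤ c. Consequently, the supremum of any rate functional of Q over the set of Q that are feasible simultaneously for all such W equals its supremum over the set of Q feasible for W = γ_w·1. -/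
open Matrix
open scoped ComplexOrder

/-- The detection (relative-entropy) functional at Willie:
`D(W, Q) = log (det (1 + σ_w⁻² W Q)).re + ((1 + σ_w⁻² W Q)⁻¹.trace).re − N_a`. -/
noncomputable def Dfun {Na : ℕ} (σw : ℝ) (W Q : Matrix (Fin Na) (Fin Na) ℂ) : ℝ :=
  Real.log ((1 + (σw ^ 2)⁻¹ • (W * Q)).det.re)
    + (((1 + (σw ^ 2)⁻¹ • (W * Q))⁻¹).trace).re - Na

section Aux

variable {n : Type*} [Fintype n] [DecidableEq n]

section SqrtPort
open scoped MatrixOrder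

noncomputable def Matrix.PosSemidef.sqrt {A : Matrix n n ℂ} (_hA : A.PosSemidef) :
    Matrix n n ℂ :=
  CFC.sqrt A

lemma Matrix.PosSemidef.sqrt_mul_self {A : Matrix n n ℂ} (hA : A.PosSemidef) :
    hA.sqrt * hA.sqrt = A :=
  CFC.sqrt_mul_sqrt_self A hA.nonneg

lemma Matrix.PosSemidef.posSemidef_sqrt {A : Matrix n n ℂ} (hA : A.PosSemidef) :
    hA.sqrt.PosSemidef :=
  (CFC.sqrt_nonneg A).posSemidef

end SqrtPort

/-- diagonal entries of a psd matrix are nonneg -/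
lemma aux_psd_diag_nonneg {P : Matrix n n ℂ} (hP : P.PosSemidef) (i : n) : 0 ≤ P i i := by
  exact hP.diag_nonneg

lemma aux_psd_trace_re_nonneg {P : Matrix n n ℂ} (hP : P.PosSemidef) : 0 ≤ P.trace.re := by
  have h : ∀ i, 0 ≤ (P i i).re := fun i => (Complex.le_def.mp (aux_psd_diag_nonneg hP i)).1
  rw [Matrix.trace, Complex.re_sum]
  exact Finset.sum_nonneg fun i _ => h i

lemma aux_trace_mul_psd_re_nonneg {A B : Matrix n n ℂ} (hA : A.PosSemidef) (hB : B.PosSemidef) :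
    0 ≤ (A * B).trace.re := by
  have h1 : A * B = hA.sqrt * (hA.sqrt * B) := by
    rw [← mul_assoc, hA.sqrt_mul_self]
  have h2 : (A * B).trace = (hA.sqrt * B * hA.sqrt).trace := by
    rw [h1, Matrix.trace_mul_comm, mul_assoc]
  have h3 : (hA.sqrt * B * hA.sqrtᴴ).PosSemidef := hB.mul_mul_conjTranspose_same hA.sqrt
  rw [hA.posSemidef_sqrt.isHermitian] at h3
  rw [h2]; exact aux_psd_trace_re_nonneg h3

lemma aux_unitary_conj_diag_inv_trace (U : Matrix n n ℂ) (hUU : star U * U = 1)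
    (hUU' : U * star U = 1) (d : n → ℂ) (hd : ∀ i, d i ≠ 0) :
    (U * diagonal d * star U)⁻¹.trace = ∑ i, (d i)⁻¹ := by
  have hinv : (U * diagonal d * star U)⁻¹ = U * diagonal (fun i => (d i)⁻¹) * star U := by
    apply Matrix.inv_eq_right_inv
    calc U * diagonal d * star U * (U * diagonal (fun i => (d i)⁻¹) * star U)
        = U * (diagonal d * (star U * U) * diagonal (fun i => (d i)⁻¹)) * star U := by
          simp only [mul_assoc]
      _ = 1 := by
          rw [hUU, mul_one, Matrix.diagonal_mul_diagonal]
          have : (fun i => d i * (d i)⁻¹) = fun _ => (1:ℂ) := by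
            funext i; exact mul_inv_cancel₀ (hd i)
          rw [this, Matrix.diagonal_one, mul_one, hUU']
  rw [hinv, Matrix.trace_mul_comm, ← mul_assoc, hUU, one_mul, Matrix.trace_diagonal]

lemma aux_posdef_inv_trace {H : Matrix n n ℂ} (hH : H.PosDef) :
    H⁻¹.trace = ∑ i, (((hH.isHermitian.eigenvalues i)⁻¹ : ℝ) : ℂ) := by
  have hUU : star (hH.isHermitian.eigenvectorUnitary : Matrix n n ℂ) *
      (hH.isHermitian.eigenvectorUnitary : Matrix n n ℂ) = 1 :=
    (Matrix.mem_unitaryGroup_iff').mp hH.isHermitian.eigenvectorUnitary.2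
  have hUU' : (hH.isHermitian.eigenvectorUnitary : Matrix n n ℂ) *
      star (hH.isHermitian.eigenvectorUnitary : Matrix n n ℂ) = 1 :=
    (Matrix.mem_unitaryGroup_iff).mp hH.isHermitian.eigenvectorUnitary.2
  have hd : ∀ i, (RCLike.ofReal ∘ hH.isHermitian.eigenvalues) i ≠ (0:ℂ) := fun i => by
    simp only [Function.comp_apply, ne_eq, RCLike.ofReal_eq_zero]
    exact (hH.eigenvalues_pos i).ne'
  have h := congrArg (fun M : Matrix n n ℂ => M⁻¹.trace) hH.isHermitian.spectral_theorem
  simp only [Unitary.conjStarAlgAut_apply, Unitary.coe_star] at h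
  rw [h, aux_unitary_conj_diag_inv_trace _ hUU hUU' _ hd]
  push_cast
  rfl

lemma aux_posdef_det_re_pos {H : Matrix n n ℂ} (hH : H.PosDef) : 0 < H.det.re :=
  (Complex.lt_def.mp hH.det_pos).1

lemma aux_posdef_det_im_zero {H : Matrix n n ℂ} (hH : H.PosDef) : H.det.im = 0 :=
  ((Complex.lt_def.mp hH.det_pos).2).symm

/-- `log det H + tr H⁻¹ ≥ n` for positive definite `H`. -/
lemma aux_log_det_add_trace_inv_ge {H : Matrix n n ℂ} (hH : H.PosDef) :
    (Fintype.card n : ℝ) ≤ Real.log (H.det.re) + (H⁻¹.trace).re := by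
  set ev := hH.isHermitian.eigenvalues with hev
  have hpos : ∀ i, 0 < ev i := hH.eigenvalues_pos
  have hdet : H.det.re = ∏ i, ev i := by
    have := hH.isHermitian.det_eq_prod_eigenvalues
    rw [this, ← RCLike.ofReal_prod]
    exact Complex.ofReal_re _
  have htr : (H⁻¹.trace).re = ∑ i, (ev i)⁻¹ := by
    rw [aux_posdef_inv_trace hH, ← Complex.ofReal_sum]
    exact Complex.ofReal_re _
  rw [hdet, htr, Real.log_prod (fun i _ => (hpos i).ne')]
  have key : ∀ i : n, (1:ℝ) ≤ Real.log (ev i) + (ev i)⁻¹ := by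
    intro i
    have h1 : Real.log (ev i)⁻¹ ≤ (ev i)⁻¹ - 1 :=
      Real.log_le_sub_one_of_pos (inv_pos.mpr (hpos i))
    rw [Real.log_inv] at h1
    linarith
  calc (Fintype.card n : ℝ) = ∑ _i : n, (1:ℝ) := by simp
    _ ≤ ∑ i, (Real.log (ev i) + (ev i)⁻¹) := Finset.sum_le_sum (fun i _ => key i)
    _ = ∑ i, Real.log (ev i) + ∑ i, (ev i)⁻¹ := Finset.sum_add_distrib

/-- if `C` commutes with invertible `M` then it commutes with `M⁻¹` -/
lemma aux_commute_inv {C M : Matrix n n ℂ} (h : IsUnit M.det) (hc : C * M = M * C) :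
    C * M⁻¹ = M⁻¹ * C := by
  calc C * M⁻¹ = M⁻¹ * (M * C) * M⁻¹ := by
        rw [← mul_assoc, Matrix.nonsing_inv_mul M h, one_mul]
    _ = M⁻¹ * C * (M * M⁻¹) := by rw [← hc]; simp only [mul_assoc]
    _ = M⁻¹ * C := by rw [Matrix.mul_nonsing_inv M h, mul_one]

lemma aux_psd_one_sub_inv {X : Matrix n n ℂ} (hX : X.PosSemidef) :
    (1 - (1 + X)⁻¹).PosSemidef := by
  have hH : (1 + X).PosDef := Matrix.PosDef.add_posSemidef Matrix.PosDef.one hX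
  have hdet : IsUnit (1 + X).det := hH.det_pos.ne'.isUnit
  set C := hX.sqrt with hC
  have hCC : C * C = X := hX.sqrt_mul_self
  have hcomm : C * (1 + X) = (1 + X) * C := by
    rw [mul_add, add_mul, mul_one, one_mul, ← hCC, ← mul_assoc]
  have hcomm' : C * (1 + X)⁻¹ = (1 + X)⁻¹ * C := aux_commute_inv hdet hcomm
  have key : 1 - (1 + X)⁻¹ = C * (1 + X)⁻¹ * Cᴴ := by
    rw [hX.posSemidef_sqrt.isHermitian, hcomm']
    have h1 : 1 - (1 + X)⁻¹ = (1 + X)⁻¹ * X := by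
      rw [mul_add, mul_one] at *
      have := Matrix.nonsing_inv_mul (1 + X) hdet
      rw [mul_add, mul_one] at this
      linear_combination (norm := abel) -this
    rw [h1, mul_assoc, hCC]
  rw [key]
  exact hH.inv.posSemidef.mul_mul_conjTranspose_same C

lemma aux_sqrt_isUnit_det {M : Matrix n n ℂ} (hM : M.PosDef) :
    IsUnit (hM.posSemidef.sqrt).det := by
  have h : hM.posSemidef.sqrt.det * hM.posSemidef.sqrt.det = M.det := by
    rw [← Matrix.det_mul, hM.posSemidef.sqrt_mul_self]
  have hMdet : M.det ≠ 0 := hM.det_pos.ne'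
  have : hM.posSemidef.sqrt.det ≠ 0 := fun h0 => hMdet (by rw [← h, h0, zero_mul])
  exact this.isUnit

/-- The core functional `G(B) = log det (1+B) + tr (1+B)⁻¹`. -/
noncomputable def Gf (B : Matrix n n ℂ) : ℝ :=
  Real.log ((1 + B).det.re) + ((1 + B)⁻¹.trace).re

/-- Monotonicity of `Gf` on the positive semidefinite cone. -/
lemma Gf_mono {B B' : Matrix n n ℂ} (hB : B.PosSemidef) (hB' : B'.PosSemidef)
    (hd : (B' - B).PosSemidef) : Gf B ≤ Gf B' := by
  have hM : (1 + B).PosDef := Matrix.PosDef.add_posSemidef Matrix.PosDef.one hB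
  have hM' : (1 + B').PosDef := Matrix.PosDef.add_posSemidef Matrix.PosDef.one hB'
  set M := 1 + B with hMdef
  set S := hM.posSemidef.sqrt with hSdef
  have hSS : S * S = M := hM.posSemidef.sqrt_mul_self
  have hSdet : IsUnit S.det := aux_sqrt_isUnit_det hM
  have hST : S * S⁻¹ = 1 := Matrix.mul_nonsing_inv S hSdet
  have hTS : S⁻¹ * S = 1 := Matrix.nonsing_inv_mul S hSdet
  have hTH : S⁻¹ᴴ = S⁻¹ := by
    rw [Matrix.conjTranspose_nonsing_inv, hM.posSemidef.posSemidef_sqrt.isHermitian]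
  set X := S⁻¹ * (B' - B) * S⁻¹ with hXdef
  have hX : X.PosSemidef := by
    have := hd.mul_mul_conjTranspose_same S⁻¹
    rwa [hTH] at this
  have hXpd : (1 + X).PosDef := Matrix.PosDef.add_posSemidef Matrix.PosDef.one hX
  have ha : 1 + B' = S * (1 + X) * S := by
    have h1 : S * (1 + X) * S = S * S + S * X * S := by
      rw [mul_add, mul_one, add_mul]
    have h2 : S * X * S = B' - B := by
      rw [hXdef]
      calc S * (S⁻¹ * (B' - B) * S⁻¹) * S
          = (S * S⁻¹) * (B' - B) * (S⁻¹ * S) := by simp only [mul_assoc]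
        _ = B' - B := by rw [hST, hTS, one_mul, mul_one]
    rw [h1, h2, hSS, hMdef]; abel
  have hdetfact : (1 + B').det = M.det * (1 + X).det := by
    rw [ha, Matrix.det_mul, Matrix.det_mul, ← hSS, Matrix.det_mul]; ring
  have hdetre : (1 + B').det.re = M.det.re * (1 + X).det.re := by
    rw [hdetfact, Complex.mul_re, aux_posdef_det_im_zero hM, zero_mul, sub_zero]
  have hTTM : S⁻¹ * S⁻¹ = M⁻¹ := by rw [← hSS, Matrix.mul_inv_rev]
  have hinv : (1 + B')⁻¹ = S⁻¹ * ((1 + X)⁻¹ * S⁻¹) := by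
    rw [ha, Matrix.mul_inv_rev, Matrix.mul_inv_rev]
  have htr : (1 + B')⁻¹.trace = ((1 + X)⁻¹ * M⁻¹).trace := by
    rw [hinv, Matrix.trace_mul_comm, mul_assoc, hTTM]
  set Z := 1 - (1 + X)⁻¹ with hZdef
  have hZ : Z.PosSemidef := aux_psd_one_sub_inv hX
  have hW1 : (1 - M⁻¹).PosSemidef := aux_psd_one_sub_inv hB
  have hsplit : ((1 + X)⁻¹ * M⁻¹).trace = M⁻¹.trace - (Z * M⁻¹).trace := by
    have : (1 + X)⁻¹ * M⁻¹ = M⁻¹ - Z * M⁻¹ := by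
      rw [hZdef, sub_mul, one_mul]; abel
    rw [this, Matrix.trace_sub]
  have hest : (Z * M⁻¹).trace.re ≤ Z.trace.re := by
    have h0 : 0 ≤ (Z * (1 - M⁻¹)).trace.re := aux_trace_mul_psd_re_nonneg hZ hW1
    have he : (Z * (1 - M⁻¹)).trace = Z.trace - (Z * M⁻¹).trace := by
      rw [mul_sub, mul_one, Matrix.trace_sub]
    rw [he, Complex.sub_re] at h0; linarith
  have hZtr : Z.trace.re = (Fintype.card n : ℝ) - ((1 + X)⁻¹.trace).re := by
    rw [hZdef, Matrix.trace_sub, Complex.sub_re, Matrix.trace_one]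
    simp
  have hkey : (Fintype.card n : ℝ) ≤ Real.log ((1 + X).det.re) + ((1 + X)⁻¹.trace).re :=
    aux_log_det_add_trace_inv_ge hXpd
  have hlog : Real.log ((1 + B').det.re)
      = Real.log (M.det.re) + Real.log ((1 + X).det.re) := by
    rw [hdetre, Real.log_mul (aux_posdef_det_re_pos hM).ne' (aux_posdef_det_re_pos hXpd).ne']
  have hGf' : Gf B' = Real.log (M.det.re) + Real.log ((1 + X).det.re)
      + (M⁻¹.trace.re - (Z * M⁻¹).trace.re) := by
    rw [Gf, hlog, htr, hsplit, Complex.sub_re]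
  rw [hGf', Gf, ← hMdef]
  nlinarith [hest, hkey, hZtr]

lemma aux_det_shift (W T : Matrix n n ℂ) : (1 + W * T * T).det = (1 + T * W * T).det := by
  have h := Matrix.det_one_add_mul_comm (W * T) T
  rw [← mul_assoc] at h
  exact h

lemma aux_trace_shift (W T : Matrix n n ℂ) (h1 : IsUnit (1 + W * T * T).det)
    (h2 : IsUnit (1 + T * W * T).det) :
    (1 + W * T * T)⁻¹.trace = (1 + T * W * T)⁻¹.trace := by
  set A := W * T * T with hA
  set Bm := T * W * T with hB
  have hswap : T * (1 + A) = (1 + Bm) * T := by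
    rw [mul_add, add_mul, mul_one, one_mul, hA, hB]
    simp only [mul_assoc]
  have hswap' : (1 + Bm)⁻¹ * T = T * (1 + A)⁻¹ := by
    calc (1 + Bm)⁻¹ * T
        = (1 + Bm)⁻¹ * (T * ((1 + A) * (1 + A)⁻¹)) := by
          rw [Matrix.mul_nonsing_inv _ h1, mul_one]
      _ = (1 + Bm)⁻¹ * (1 + Bm) * (T * (1 + A)⁻¹) := by
          rw [← mul_assoc T, hswap]; simp only [mul_assoc]
      _ = T * (1 + A)⁻¹ := by rw [Matrix.nonsing_inv_mul _ h2, one_mul]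
  have hida : (1 + A)⁻¹ = 1 - A * (1 + A)⁻¹ := by
    have := Matrix.mul_nonsing_inv _ h1
    rw [add_mul, one_mul] at this
    exact eq_sub_of_add_eq this
  have hidb : (1 + Bm)⁻¹ = 1 - Bm * (1 + Bm)⁻¹ := by
    have := Matrix.mul_nonsing_inv _ h2
    rw [add_mul, one_mul] at this
    exact eq_sub_of_add_eq this
  have htr : (A * (1 + A)⁻¹).trace = (Bm * (1 + Bm)⁻¹).trace := by
    calc (A * (1 + A)⁻¹).trace = (W * T * (T * (1 + A)⁻¹)).trace := by
          rw [hA, mul_assoc]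
      _ = (W * T * ((1 + Bm)⁻¹ * T)).trace := by rw [hswap']
      _ = (T * (W * T * (1 + Bm)⁻¹)).trace := by
          rw [← mul_assoc, Matrix.trace_mul_comm]
      _ = (Bm * (1 + Bm)⁻¹).trace := by rw [hB]; simp only [mul_assoc]
  rw [hida, hidb, Matrix.trace_sub, Matrix.trace_sub, htr]

end Aux

/-- Rewriting `Dfun` through the symmetrized matrix `T W T`. -/
lemma Dfun_eq_Gf {Na : ℕ} (σw : ℝ) (hσw : 0 < σw) (W Q : Matrix (Fin Na) (Fin Na) ℂ)
    (hW : W.PosSemidef) (hQ : Q.PosSemidef) :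
    Dfun σw W Q
      = Gf (Real.sqrt ((σw ^ 2)⁻¹) • hQ.sqrt * W * (Real.sqrt ((σw ^ 2)⁻¹) • hQ.sqrt)) - Na := by
  set r := Real.sqrt ((σw ^ 2)⁻¹) with hr
  set S := hQ.sqrt with hS
  set T := r • S with hT
  have hrr : r * r = (σw ^ 2)⁻¹ := Real.mul_self_sqrt (by positivity)
  have hTH : Tᴴ = T := by
    rw [hT, Matrix.conjTranspose_smul, hQ.posSemidef_sqrt.isHermitian, star_trivial]
  have hpsdB : (T * W * T).PosSemidef := by
    have := hW.mul_mul_conjTranspose_same T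
    rwa [hTH] at this
  have hconv : (σw ^ 2)⁻¹ • (W * Q) = W * T * T := by
    rw [hT, Matrix.mul_smul, Matrix.mul_smul, Matrix.smul_mul, smul_smul, hrr,
      mul_assoc, hQ.sqrt_mul_self]
  have hpd : (1 + T * W * T).PosDef := Matrix.PosDef.add_posSemidef Matrix.PosDef.one hpsdB
  have h2 : IsUnit (1 + T * W * T).det := hpd.det_pos.ne'.isUnit
  have h1 : IsUnit (1 + W * T * T).det := by
    rw [aux_det_shift]; exact h2
  rw [Dfun, Gf, hconv, aux_det_shift W T, aux_trace_shift W T h1 h2]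

/-- The master equivalence for a fixed covariance. -/
lemma robust_iff_iso {Na : ℕ} (σw γw : ℝ) (hσw : 0 < σw) (hγw : 0 < γw) (c : ℝ)
    (Q : Matrix (Fin Na) (Fin Na) ℂ) (hQ : Q.PosSemidef) :
    (∀ W : Matrix (Fin Na) (Fin Na) ℂ, W.PosSemidef →
        ((γw : ℂ) • (1 : Matrix (Fin Na) (Fin Na) ℂ) - W).PosSemidef →
        Dfun σw W Q ≤ c) ↔
      Dfun σw ((γw : ℂ) • (1 : Matrix (Fin Na) (Fin Na) ℂ)) Q ≤ c := by
  have hγ1 : ((γw : ℂ) • (1 : Matrix (Fin Na) (Fin Na) ℂ)).PosSemidef := by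
    have h : (γw : ℂ) • (1 : Matrix (Fin Na) (Fin Na) ℂ)
        = Matrix.diagonal (fun _ => (γw : ℂ)) := by
      rw [Matrix.smul_one_eq_diagonal]
    rw [h]
    exact Matrix.PosSemidef.diagonal (fun _ => by
      simpa using Complex.zero_le_real.mpr hγw.le)
  constructor
  · intro h
    refine h _ hγ1 ?_
    rw [sub_self]
    exact Matrix.PosSemidef.zero
  · intro h W hW hgw
    set r := Real.sqrt ((σw ^ 2)⁻¹) with hr
    set T := r • hQ.sqrt with hT
    have hTH : Tᴴ = T := by
      rw [hT, Matrix.conjTranspose_smul, hQ.posSemidef_sqrt.isHermitian, star_trivial]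
    have hB : (T * W * T).PosSemidef := by
      have := hW.mul_mul_conjTranspose_same T
      rwa [hTH] at this
    have hB' : (T * ((γw : ℂ) • (1 : Matrix (Fin Na) (Fin Na) ℂ)) * T).PosSemidef := by
      have := hγ1.mul_mul_conjTranspose_same T
      rwa [hTH] at this
    have hdiff : (T * ((γw : ℂ) • (1 : Matrix (Fin Na) (Fin Na) ℂ)) * T - T * W * T).PosSemidef := by
      have heq : T * ((γw : ℂ) • (1 : Matrix (Fin Na) (Fin Na) ℂ)) * T - T * W * T
          = T * ((γw : ℂ) • (1 : Matrix (Fin Na) (Fin Na) ℂ) - W) * T := by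
        rw [mul_sub, sub_mul]
      rw [heq]
      have := hgw.mul_mul_conjTranspose_same T
      rwa [hTH] at this
    have hmono := Gf_mono hB hB' hdiff
    have e1 := Dfun_eq_Gf σw hσw W Q hW hQ
    have e2 := Dfun_eq_Gf σw hσw ((γw : ℂ) • (1 : Matrix (Fin Na) (Fin Na) ℂ)) Q hγ1 hQ
    rw [e1]; rw [e2] at h
    have := sub_le_sub_right hmono (Na : ℝ)
    exact le_trans this h

/-- **Saddle-point / robust feasibility (Propositions 2 and 3 combined).**
Feasibility of `Q` against every Willie Gram matrix of spectral norm at most `γ_w` is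
equivalent to feasibility against the isotropic matrix `γ_w·1`; consequently, the supremum
of any rate functional over the robustly feasible covariances equals its supremum over the
covariances feasible for `W = γ_w·1`. -/
theorem saddle_point_robust_feasibility (Na : ℕ) (hNa : 1 ≤ Na) (σw γw : ℝ)
    (hσw : 0 < σw) (hγw : 0 < γw) (c : ℝ) (hc : 0 ≤ c)
    (Q : Matrix (Fin Na) (Fin Na) ℂ) (hQ : Q.PosSemidef) :
    ((∀ W : Matrix (Fin Na) (Fin Na) ℂ, W.PosSemidef →
        ((γw : ℂ) • (1 : Matrix (Fin Na) (Fin Na) ℂ) - W).PosSemidef →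
        Dfun σw W Q ≤ c) ↔
      Dfun σw ((γw : ℂ) • (1 : Matrix (Fin Na) (Fin Na) ℂ)) Q ≤ c) ∧
    (∀ Rfun : Matrix (Fin Na) (Fin Na) ℂ → ℝ,
      sSup {r : ℝ | ∃ Q' : Matrix (Fin Na) (Fin Na) ℂ, Q'.PosSemidef ∧
          (∀ W : Matrix (Fin Na) (Fin Na) ℂ, W.PosSemidef →
            ((γw : ℂ) • (1 : Matrix (Fin Na) (Fin Na) ℂ) - W).PosSemidef →
            Dfun σw W Q' ≤ c) ∧
          r = Rfun Q'} =
      sSup {r : ℝ | ∃ Q' : Matrix (Fin Na) (Fin Na) ℂ, Q'.PosSemidef ∧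
          Dfun σw ((γw : ℂ) • (1 : Matrix (Fin Na) (Fin Na) ℂ)) Q' ≤ c ∧
          r = Rfun Q'}) := by
  constructor
  · exact robust_iff_iso σw γw hσw hγw c Q hQ
  · intro Rfun
    congr 1
    ext r
    simp only [Set.mem_setOf_eq]
    constructor
    · rintro ⟨Q', hQ', hfeas, rfl⟩
      exact ⟨Q', hQ', (robust_iff_iso σw γw hσw hγw c Q' hQ').mp hfeas, rfl⟩
    · rintro ⟨Q', hQ', hfeas, rfl⟩
      exact ⟨Q', hQ', (robust_iff_iso σw γw hσw hγw c Q' hQ').mpr hfeas, rfl⟩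
end

section
/- Square-root law achievability over the MIMO AWGN channel (Theorem 2, lower bound): Let N_a ≥ 1 and n ≥ 1 be integers, σ_b, σ_w, γ_w, δ, P > 0 real numbers, and let W_b be an N_a×N_a complex Hermitian positive semidefinite matrix of rank N whose nonzero eigenvalues are λ_1, …, λ_N > 0. Assume √2·N·σ_w²·δ/(γ_w·√(n·N_a)) ≤ P. Define C_pd(δ) := sSup { R(Q) : Q an N_a×N_a complex Hermitian positive semidefinite matrix with (Q.trace).re ≤ P and n·D(γ_w·1, Q) ≤ 2δ² }. Then C_pd(δ) ≥ Σ_{i=1}^{N} Real.log(1 + √2·σ_w²·δ·λ_i/(σ_b²·γ_w·√(n·N_a))). -/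
open Matrix
open scoped ComplexOrder

/-- The rate functional for Bob's channel: `R(Q) = log (det (1 + σ_b⁻² W_b Q)).re`. -/
noncomputable def Rfun {Na : ℕ} (σb : ℝ) (Wb Q : Matrix (Fin Na) (Fin Na) ℂ) : ℝ :=
  Real.log ((1 + (σb ^ 2)⁻¹ • (Wb * Q)).det.re)

namespace SRLaux

variable {m : ℕ} (U : Matrix.unitaryGroup (Fin m) ℂ)

noncomputable def cnj (d : Fin m → ℂ) : Matrix (Fin m) (Fin m) ℂ :=
  (U : Matrix (Fin m) (Fin m) ℂ) * Matrix.diagonal d * star (U : Matrix (Fin m) (Fin m) ℂ)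

lemma hsu : star (U : Matrix (Fin m) (Fin m) ℂ) * U = 1 := U.2.1
lemma hus : (U : Matrix (Fin m) (Fin m) ℂ) * star (U : Matrix (Fin m) (Fin m) ℂ) = 1 := U.2.2

lemma hsu' (X : Matrix (Fin m) (Fin m) ℂ) :
    star (U : Matrix (Fin m) (Fin m) ℂ) * ((U : Matrix (Fin m) (Fin m) ℂ) * X) = X := by
  rw [← mul_assoc, hsu, one_mul]

lemma cnj_mul (d e : Fin m → ℂ) : cnj U d * cnj U e = cnj U (d * e) := by
  have hde : Matrix.diagonal d * Matrix.diagonal e = Matrix.diagonal (d * e) :=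
    Matrix.diagonal_mul_diagonal d e
  simp only [cnj, mul_assoc, hsu' U]
  rw [← hde, mul_assoc]

lemma cnj_one : cnj U 1 = 1 := by
  have h1 : Matrix.diagonal (1 : Fin m → ℂ) = 1 := Matrix.diagonal_one
  rw [cnj, h1, Matrix.mul_one, hus U]

lemma cnj_add (d e : Fin m → ℂ) : cnj U d + cnj U e = cnj U (d + e) := by
  have hde : Matrix.diagonal d + Matrix.diagonal e = Matrix.diagonal (d + e) :=
    Matrix.diagonal_add d e
  simp only [cnj, ← hde, Matrix.add_mul, Matrix.mul_add]

lemma cnj_smul (a : ℂ) (d : Fin m → ℂ) : a • cnj U d = cnj U (a • d) := by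
  have hde : a • Matrix.diagonal d = Matrix.diagonal (a • d) := by
    ext i j
    by_cases h : i = j <;> simp [Matrix.diagonal, h]
  simp only [cnj, ← hde, Matrix.smul_mul, Matrix.mul_smul]

lemma cnj_det (d : Fin m → ℂ) : (cnj U d).det = ∏ j, d j := by
  rw [cnj, Matrix.det_mul, Matrix.det_mul]
  have : (U : Matrix (Fin m) (Fin m) ℂ).det * (Matrix.diagonal d).det
      * (star (U : Matrix (Fin m) (Fin m) ℂ)).det
      = (Matrix.diagonal d).det * ((U : Matrix (Fin m) (Fin m) ℂ).det
      * (star (U : Matrix (Fin m) (Fin m) ℂ)).det) := by ring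
  rw [this, ← Matrix.det_mul, hus U, Matrix.det_one, mul_one, Matrix.det_diagonal]

lemma cnj_trace (d : Fin m → ℂ) : (cnj U d).trace = ∑ j, d j := by
  rw [cnj, Matrix.trace_mul_cycle, hsu U, Matrix.one_mul, Matrix.trace_diagonal]

lemma cnj_inv (d : Fin m → ℂ) (h : ∀ j, d j ≠ 0) : (cnj U d)⁻¹ = cnj U d⁻¹ := by
  apply Matrix.inv_eq_right_inv
  rw [cnj_mul]
  have : d * d⁻¹ = 1 := by
    funext j; simp [Pi.mul_apply, mul_inv_cancel₀ (h j)]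
  rw [this, cnj_one]

lemma cnj_posSemidef (d : Fin m → ℝ) (h : ∀ j, 0 ≤ d j) :
    (cnj U fun j => (d j : ℂ)).PosSemidef := by
  have hd : (Matrix.diagonal fun j => ((d j : ℂ))).PosSemidef := by
    rw [Matrix.posSemidef_diagonal_iff]
    intro i
    rw [Complex.zero_le_real]
    exact h i
  simpa [cnj, Matrix.star_eq_conjTranspose] using
    hd.mul_mul_conjTranspose_same (U : Matrix (Fin m) (Fin m) ℂ)



lemma psd_entry_bound {m : ℕ} {Q : Matrix (Fin m) (Fin m) ℂ} (hQ : Q.PosSemidef) {P : ℝ}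
    (htr : Q.trace.re ≤ P) (k j : Fin m) : ‖Q k j‖ ≤ P := by
  obtain ⟨B, rfl⟩ : ∃ B : Matrix (Fin m) (Fin m) ℂ, Q = Bᴴ * B := by
    open scoped MatrixOrder in exact CStarAlgebra.nonneg_iff_eq_star_mul_self.mp hQ.nonneg
  set v : Fin m → EuclideanSpace ℂ (Fin m) := fun a => WithLp.toLp 2 (fun i => B i a) with hv
  have hentry : ∀ a b : Fin m, (Bᴴ * B) a b = inner ℂ (v a) (v b) := by
    intro a b
    rw [Matrix.mul_apply, PiLp.inner_apply]
    refine Finset.sum_congr rfl fun i _ => ?_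
    simp [hv, Matrix.conjTranspose_apply, RCLike.inner_apply, mul_comm]
  have hnorm : ∀ a, ((Bᴴ * B) a a).re = ‖v a‖ ^ 2 := by
    intro a
    rw [hentry, inner_self_eq_norm_sq_to_K]
    norm_cast
  have htr' : ∑ a, ‖v a‖ ^ 2 ≤ P := by
    have : (Bᴴ * B).trace.re = ∑ a, ‖v a‖ ^ 2 := by
      rw [Matrix.trace, Complex.re_sum]
      exact Finset.sum_congr rfl fun a _ => hnorm a
    linarith [htr, this ▸ htr]
  have hle : ∀ a, ‖v a‖ ^ 2 ≤ P := by
    intro a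
    refine le_trans ?_ htr'
    exact Finset.single_le_sum (f := fun b => ‖v b‖ ^ 2) (fun b _ => sq_nonneg _)
      (Finset.mem_univ a)
  have h1 : ‖(Bᴴ * B) k j‖ ≤ ‖v k‖ * ‖v j‖ := by
    rw [hentry]
    exact norm_inner_le_norm _ _
  refine h1.trans ?_
  nlinarith [hle k, hle j, norm_nonneg (v k), norm_nonneg (v j), sq_nonneg (‖v k‖ - ‖v j‖)]

lemma det_abs_bound {m : ℕ} (M : Matrix (Fin m) (Fin m) ℂ) {K : ℝ} (hK : 0 ≤ K)
    (h : ∀ i j, ‖M i j‖ ≤ K) :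
    ‖M.det‖ ≤ (m.factorial : ℝ) * K ^ m := by
  rw [Matrix.det_apply']
  refine le_trans (norm_sum_le _ _) ?_
  have hterm : ∀ σ : Equiv.Perm (Fin m), ‖(Equiv.Perm.sign σ : ℂ) * ∏ i, M (σ i) i‖ ≤ K ^ m := by
    intro σ
    rw [norm_mul]
    have hs : ‖(Equiv.Perm.sign σ : ℂ)‖ = 1 := by
      rcases Int.units_eq_one_or (Equiv.Perm.sign σ) with hσ | hσ <;> rw [hσ] <;> simp
    rw [hs, one_mul, norm_prod]
    calc ∏ i, ‖M (σ i) i‖ ≤ ∏ _i : Fin m, K :=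
          Finset.prod_le_prod (fun i _ => norm_nonneg _) (fun i _ => h (σ i) i)
      _ = K ^ m := by simp
  calc ∑ σ : Equiv.Perm (Fin m), ‖(Equiv.Perm.sign σ : ℂ) * ∏ i, M (σ i) i‖
      ≤ (Finset.univ : Finset (Equiv.Perm (Fin m))).card • K ^ m :=
        Finset.sum_le_card_nsmul _ _ _ (fun σ _ => hterm σ)
    _ = (m.factorial : ℝ) * K ^ m := by
        rw [Finset.card_univ, Fintype.card_perm, Fintype.card_fin, nsmul_eq_mul]


end SRLaux

set_option maxHeartbeats 1000000 in
open SRLaux in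
/-- **Square-root law achievability over the MIMO AWGN channel (Theorem 2, lower bound).**
If `W_b` is Hermitian PSD of rank `N` with positive eigenvalues `λ_1, …, λ_N` (the remaining
`N_a − N` eigenvalues being zero) and `√2·N·σ_w²·δ/(γ_w·√(n·N_a)) ≤ P`, then the `δ`-PD
constrained capacity `C_pd(δ)` (for the worst-case isotropic Willie Gram matrix `γ_w·1`)
is at least `Σ_i log(1 + √2·σ_w²·δ·λ_i/(σ_b²·γ_w·√(n·N_a)))`. -/
theorem srl_mimo_achievability (Na n N : ℕ) (hNa : 1 ≤ Na) (hn : 1 ≤ n)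
    (σb σw γw δ P : ℝ) (hσb : 0 < σb) (hσw : 0 < σw) (hγw : 0 < γw)
    (hδ : 0 < δ) (hP : 0 < P)
    (Wb : Matrix (Fin Na) (Fin Na) ℂ) (hWb : Wb.PosSemidef) (hrank : Wb.rank = N)
    (lam : Fin N → ℝ) (hlam : ∀ i, 0 < lam i)
    (heig : Multiset.map lam Finset.univ.val + Multiset.replicate (Na - N) 0
      = Multiset.map hWb.1.eigenvalues Finset.univ.val)
    (hPth : Real.sqrt 2 * N * σw ^ 2 * δ / (γw * Real.sqrt ((n : ℝ) * Na)) ≤ P) :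
    ∑ i : Fin N,
        Real.log (1 + Real.sqrt 2 * σw ^ 2 * δ * lam i /
          (σb ^ 2 * γw * Real.sqrt ((n : ℝ) * Na)))
      ≤ sSup {r : ℝ | ∃ Q : Matrix (Fin Na) (Fin Na) ℂ, Q.PosSemidef ∧
          (Q.trace).re ≤ P ∧
          (n : ℝ) * Dfun σw ((γw : ℂ) • (1 : Matrix (Fin Na) (Fin Na) ℂ)) Q ≤ 2 * δ ^ 2 ∧
          r = Rfun σb Wb Q} := by
  classical
  set U : Matrix.unitaryGroup (Fin Na) ℂ := hWb.1.eigenvectorUnitary with hU_def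
  set eig : Fin Na → ℝ := hWb.1.eigenvalues with heig_def
  have heignn : ∀ j, 0 ≤ eig j := fun j => hWb.eigenvalues_nonneg j
  have hWbU : Wb = cnj U (fun j => (eig j : ℂ)) := by
    simpa [cnj, Function.comp_def, hU_def, heig_def] using hWb.1.spectral_theorem
  have hn0 : (0:ℝ) < n := by exact_mod_cast hn
  have hNa0 : (0:ℝ) < Na := by exact_mod_cast hNa
  have hnNa : (0:ℝ) < (n:ℝ) * Na := mul_pos hn0 hNa0
  have hsq : 0 < Real.sqrt ((n:ℝ) * Na) := Real.sqrt_pos.mpr hnNa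
  have hsq2 : 0 < Real.sqrt 2 := Real.sqrt_pos.mpr (by norm_num)
  set c : ℝ := Real.sqrt 2 * σw ^ 2 * δ / (γw * Real.sqrt ((n:ℝ) * Na)) with hc_def
  have hc : 0 < c := div_pos (by positivity) (mul_pos hγw hsq)
  set d : Fin Na → ℝ := fun j => if eig j = 0 then 0 else c with hd_def
  have hd0 : ∀ j, 0 ≤ d j := fun j => by
    by_cases h : eig j = 0 <;> simp [hd_def, h, hc.le]
  set Q : Matrix (Fin Na) (Fin Na) ℂ := cnj U (fun j => (d j : ℂ)) with hQ_def
  have hQpsd : Q.PosSemidef := cnj_posSemidef U d hd0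
  -- sum exchange machinery
  have hsum : ∀ g : ℝ → ℝ, g 0 = 0 →
      ∑ j : Fin Na, g (eig j) = ∑ i : Fin N, g (lam i) := by
    intro g hg
    have h1 : ∑ j : Fin Na, g (eig j)
        = (Multiset.map g (Multiset.map eig Finset.univ.val)).sum := by
      rw [Multiset.map_map]; rfl
    rw [h1, ← heig, Multiset.map_add, Multiset.sum_add, Multiset.map_replicate, hg,
      Multiset.sum_replicate, smul_zero, add_zero, Multiset.map_map]
    rfl
  have hNleNa : N ≤ Na := by
    have hcard := congrArg Multiset.card heig
    rw [Multiset.card_add, Multiset.card_map, Multiset.card_map, Multiset.card_replicate] at hcard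
    simp only [Finset.card_val, Finset.card_univ, Fintype.card_fin] at hcard
    omega
  -- real smul to complex smul
  have hrsmul : ∀ (r : ℝ) (A : Matrix (Fin Na) (Fin Na) ℂ), r • A = ((r:ℂ)) • A := by
    intro r A; ext i j; simp [Matrix.smul_apply, Complex.real_smul]
  -- trace of Q
  have htraceQ : Q.trace.re = N * c := by
    rw [hQ_def, cnj_trace, ← Complex.ofReal_sum, Complex.ofReal_re]
    have h2 : ∑ j, d j = ∑ j : Fin Na, (fun t => if t = 0 then 0 else c) (eig j) := by
      refine Finset.sum_congr rfl fun j _ => rfl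
    rw [h2, hsum (fun t => if t = 0 then (0:ℝ) else c) (by simp)]
    rw [Finset.sum_congr rfl fun i _ => if_neg (hlam i).ne']
    simp [mul_comm]
  have htrle : Q.trace.re ≤ P := by
    rw [htraceQ]
    have h3 : (N:ℝ) * c = Real.sqrt 2 * N * σw ^ 2 * δ / (γw * Real.sqrt ((n:ℝ) * Na)) := by
      rw [hc_def]; ring
    rw [h3]; exact hPth
  -- rate value
  have hWQ : Wb * Q = cnj U (fun j => ((eig j * d j : ℝ) : ℂ)) := by
    rw [hWbU, hQ_def, cnj_mul]
    refine congrArg (cnj U) ?_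
    funext j
    simp [Pi.mul_apply]
  have hMR : (1 : Matrix (Fin Na) (Fin Na) ℂ) + (σb ^ 2)⁻¹ • (Wb * Q)
      = cnj U (fun j => ((1 + (σb ^ 2)⁻¹ * (eig j * d j) : ℝ) : ℂ)) := by
    rw [hWQ, hrsmul, cnj_smul, ← cnj_one U, cnj_add]
    refine congrArg (cnj U) ?_
    funext j
    simp only [Pi.add_apply, Pi.smul_apply, Pi.one_apply, smul_eq_mul]
    push_cast
    ring
  have hfacpos : ∀ j, 0 < 1 + (σb ^ 2)⁻¹ * (eig j * d j) := by
    intro j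
    have : 0 ≤ (σb ^ 2)⁻¹ * (eig j * d j) := by
      have := mul_nonneg (heignn j) (hd0 j); positivity
    linarith
  have hRval : Rfun σb Wb Q = ∑ i : Fin N, Real.log (1 + (σb ^ 2)⁻¹ * (lam i * c)) := by
    rw [Rfun, hMR, cnj_det, ← Complex.ofReal_prod, Complex.ofReal_re,
      Real.log_prod (fun j _ => (hfacpos j).ne')]
    have h2 : ∑ j : Fin Na, Real.log (1 + (σb ^ 2)⁻¹ * (eig j * d j))
        = ∑ j : Fin Na, (fun t => Real.log (1 + (σb ^ 2)⁻¹ * (t * (if t = 0 then 0 else c)))) (eig j) := by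
      refine Finset.sum_congr rfl fun j _ => rfl
    rw [h2, hsum (fun t => Real.log (1 + (σb ^ 2)⁻¹ * (t * (if t = 0 then 0 else c)))) (by simp)]
    refine Finset.sum_congr rfl fun i _ => ?_
    rw [if_neg (hlam i).ne']
  have hRtarget : ∑ i : Fin N, Real.log (1 + (σb ^ 2)⁻¹ * (lam i * c))
      = ∑ i : Fin N, Real.log (1 + Real.sqrt 2 * σw ^ 2 * δ * lam i /
          (σb ^ 2 * γw * Real.sqrt ((n : ℝ) * Na))) := by
    refine Finset.sum_congr rfl fun i _ => ?_
    congr 1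
    rw [hc_def]
    ring
  -- detection value
  set s : ℝ := (σw ^ 2)⁻¹ * γw with hs_def
  have hs0 : 0 < s := mul_pos (by positivity) hγw
  have hpos : ∀ j, 0 < 1 + s * d j := by
    intro j
    have := mul_nonneg hs0.le (hd0 j)
    linarith
  have hMD : (1 : Matrix (Fin Na) (Fin Na) ℂ) + (σw ^ 2)⁻¹ • (((γw:ℂ) • (1 : Matrix (Fin Na) (Fin Na) ℂ)) * Q)
      = cnj U (fun j => ((1 + s * d j : ℝ) : ℂ)) := by
    rw [Matrix.smul_mul, Matrix.one_mul, hrsmul, smul_smul, hQ_def, cnj_smul, ← cnj_one U,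
      cnj_add]
    refine congrArg (cnj U) ?_
    funext j
    simp only [Pi.add_apply, Pi.smul_apply, Pi.one_apply, smul_eq_mul, hs_def]
    push_cast
    ring
  have hDval : Dfun σw ((γw:ℂ) • (1 : Matrix (Fin Na) (Fin Na) ℂ)) Q
      = ∑ j : Fin Na, (Real.log (1 + s * d j) + (1 + s * d j)⁻¹ - 1) := by
    rw [Dfun, hMD, cnj_det, cnj_inv U _ (fun j => Complex.ofReal_ne_zero.mpr (hpos j).ne'),
      cnj_trace]
    rw [← Complex.ofReal_prod, Complex.ofReal_re,
      Real.log_prod (fun j _ => ne_of_gt (by exact_mod_cast hpos j))]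
    have h2 : ∑ j : Fin Na, ((fun j => ((1 + s * d j : ℝ) : ℂ))⁻¹) j
        = (((∑ j : Fin Na, (1 + s * d j)⁻¹ : ℝ)) : ℂ) := by
      rw [Complex.ofReal_sum]
      refine Finset.sum_congr rfl fun j _ => ?_
      simp [Pi.inv_apply]
    rw [h2, Complex.ofReal_re]
    rw [show (Na:ℝ) = ∑ _j : Fin Na, (1:ℝ) by simp]
    rw [← Finset.sum_add_distrib, ← Finset.sum_sub_distrib]
  have hDsum : ∑ j : Fin Na, (Real.log (1 + s * d j) + (1 + s * d j)⁻¹ - 1)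
      = N * (Real.log (1 + s * c) + (1 + s * c)⁻¹ - 1) := by
    have h2 : ∑ j : Fin Na, (Real.log (1 + s * d j) + (1 + s * d j)⁻¹ - 1)
        = ∑ j : Fin Na, (fun t => Real.log (1 + s * (if t = 0 then 0 else c))
            + (1 + s * (if t = 0 then 0 else c))⁻¹ - 1) (eig j) := by
      refine Finset.sum_congr rfl fun j _ => rfl
    rw [h2, hsum (fun t => Real.log (1 + s * (if t = 0 then 0 else c))
            + (1 + s * (if t = 0 then 0 else c))⁻¹ - 1) (by simp)]
    rw [Finset.sum_congr rfl fun i _ => by rw [if_neg (hlam i).ne']]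
    simp [mul_comm]
    ring
  set x : ℝ := s * c with hx_def
  have hx0 : 0 ≤ x := mul_nonneg hs0.le hc.le
  have hx1 : (0:ℝ) < 1 + x := by linarith
  have hf : Real.log (1 + x) + (1 + x)⁻¹ - 1 ≤ x ^ 2 := by
    have hlog : Real.log (1 + x) ≤ x := by
      have := Real.log_le_sub_one_of_pos hx1
      linarith
    have key : (1 + x)⁻¹ ≤ x ^ 2 - x + 1 := by
      rw [inv_eq_one_div, div_le_iff₀ hx1]
      nlinarith [mul_nonneg (mul_nonneg hx0 hx0) hx0]
    linarith
  have hxval : x = Real.sqrt 2 * δ / Real.sqrt ((n:ℝ) * Na) := by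
    rw [hx_def, hs_def, hc_def]
    field_simp
  have hx2 : x ^ 2 = 2 * δ ^ 2 / ((n:ℝ) * Na) := by
    rw [hxval, div_pow, mul_pow, Real.sq_sqrt (by norm_num : (0:ℝ) ≤ 2),
      Real.sq_sqrt hnNa.le]
  have hDle : (n : ℝ) * Dfun σw ((γw : ℂ) • (1 : Matrix (Fin Na) (Fin Na) ℂ)) Q ≤ 2 * δ ^ 2 := by
    rw [hDval, hDsum]
    have h1 : (N:ℝ) * (Real.log (1 + s * c) + (1 + s * c)⁻¹ - 1) ≤ N * x ^ 2 := by
      refine mul_le_mul_of_nonneg_left ?_ (Nat.cast_nonneg N)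
      rw [show s * c = x from rfl]
      exact hf
    have h2 : (n:ℝ) * ((N:ℝ) * (Real.log (1 + s * c) + (1 + s * c)⁻¹ - 1))
        ≤ (n:ℝ) * ((N:ℝ) * x ^ 2) := mul_le_mul_of_nonneg_left h1 (Nat.cast_nonneg n)
    refine le_trans h2 ?_
    rw [hx2]
    have h3 : (n:ℝ) * ((N:ℝ) * (2 * δ ^ 2 / ((n:ℝ) * Na))) = 2 * δ ^ 2 * ((N:ℝ) / Na) := by
      field_simp
    rw [h3]
    have h4 : (N:ℝ) / Na ≤ 1 := by
      rw [div_le_one hNa0]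
      exact_mod_cast hNleNa
    calc 2 * δ ^ 2 * ((N:ℝ) / Na) ≤ 2 * δ ^ 2 * 1 :=
          mul_le_mul_of_nonneg_left h4 (by positivity)
      _ = 2 * δ ^ 2 := mul_one _
  -- boundedness of the feasible-rate set
  set CW : ℝ := ∑ i : Fin Na, ∑ k : Fin Na, ‖Wb i k‖ with hCW_def
  have hCW0 : 0 ≤ CW := Finset.sum_nonneg fun i _ => Finset.sum_nonneg fun k _ =>
    norm_nonneg _
  set K : ℝ := 1 + (σb ^ 2)⁻¹ * CW * P with hK_def
  have hK1 : (1:ℝ) ≤ K := by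
    have h0 : 0 ≤ (σb ^ 2)⁻¹ * CW * P := by positivity
    rw [hK_def]
    linarith
  have hbdd : BddAbove {r : ℝ | ∃ Q : Matrix (Fin Na) (Fin Na) ℂ, Q.PosSemidef ∧
      (Q.trace).re ≤ P ∧
      (n : ℝ) * Dfun σw ((γw : ℂ) • (1 : Matrix (Fin Na) (Fin Na) ℂ)) Q ≤ 2 * δ ^ 2 ∧
      r = Rfun σb Wb Q} := by
    refine ⟨Real.log ((Na.factorial : ℝ) * K ^ Na), ?_⟩
    rintro r ⟨Q', hQ', htr', -, rfl⟩
    have hQe : ∀ k j, ‖Q' k j‖ ≤ P := psd_entry_bound hQ' htr'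
    have hMe : ∀ i j, ‖(1 + (σb ^ 2)⁻¹ • (Wb * Q')) i j‖ ≤ K := by
      intro i j
      rw [Matrix.add_apply]
      refine le_trans (norm_add_le _ _) ?_
      have h1 : ‖(1 : Matrix (Fin Na) (Fin Na) ℂ) i j‖ ≤ 1 := by
        rw [Matrix.one_apply]; split <;> simp
      have hW : ‖(Wb * Q') i j‖ ≤ CW * P := by
        rw [Matrix.mul_apply]
        refine le_trans (norm_sum_le _ _) ?_
        calc ∑ k, ‖Wb i k * Q' k j‖
            = ∑ k, ‖Wb i k‖ * ‖Q' k j‖ := by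
              simp [norm_mul]
          _ ≤ ∑ k, ‖Wb i k‖ * P :=
              Finset.sum_le_sum fun k _ =>
                mul_le_mul_of_nonneg_left (hQe k j) (norm_nonneg _)
          _ = (∑ k, ‖Wb i k‖) * P := (Finset.sum_mul _ _ _).symm
          _ ≤ CW * P := by
              refine mul_le_mul_of_nonneg_right ?_ hP.le
              exact Finset.single_le_sum
                (f := fun i => ∑ k, ‖Wb i k‖)
                (fun a _ => Finset.sum_nonneg fun k _ => norm_nonneg _)
                (Finset.mem_univ i)
      have h2 : ‖((σb ^ 2)⁻¹ • (Wb * Q')) i j‖ ≤ (σb ^ 2)⁻¹ * (CW * P) := by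
        rw [Matrix.smul_apply, norm_smul,
          Real.norm_of_nonneg (by positivity : (0:ℝ) ≤ (σb ^ 2)⁻¹)]
        exact mul_le_mul_of_nonneg_left hW (by positivity)
      calc ‖(1 : Matrix (Fin Na) (Fin Na) ℂ) i j‖
            + ‖((σb ^ 2)⁻¹ • (Wb * Q')) i j‖
          ≤ 1 + (σb ^ 2)⁻¹ * (CW * P) := add_le_add h1 h2
        _ = K := by rw [hK_def]; ring
    have hdet := det_abs_bound _ (le_trans zero_le_one hK1) hMe
    have hB1 : (1:ℝ) ≤ (Na.factorial : ℝ) * K ^ Na := by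
      have hf1 : (1:ℝ) ≤ (Na.factorial : ℝ) := by
        exact_mod_cast Nat.one_le_iff_ne_zero.mpr Na.factorial_ne_zero
      have hp1 : (1:ℝ) ≤ K ^ Na := one_le_pow₀ hK1
      nlinarith
    rw [Rfun, ← Real.log_abs]
    rcases eq_or_ne (|((1 + (σb ^ 2)⁻¹ • (Wb * Q')).det.re)|) 0 with h0 | h0
    · rw [h0, Real.log_zero]
      exact Real.log_nonneg hB1
    · refine Real.log_le_log (lt_of_le_of_ne (abs_nonneg _) (Ne.symm h0)) ?_
      exact le_trans (le_trans (Complex.abs_re_le_norm _) hdet) (le_refl _)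
  -- conclude
  have hmem : (∑ i : Fin N, Real.log (1 + Real.sqrt 2 * σw ^ 2 * δ * lam i /
      (σb ^ 2 * γw * Real.sqrt ((n : ℝ) * Na)))) ∈ {r : ℝ | ∃ Q : Matrix (Fin Na) (Fin Na) ℂ,
      Q.PosSemidef ∧ (Q.trace).re ≤ P ∧
      (n : ℝ) * Dfun σw ((γw : ℂ) • (1 : Matrix (Fin Na) (Fin Na) ℂ)) Q ≤ 2 * δ ^ 2 ∧
      r = Rfun σb Wb Q} := by
    exact ⟨Q, hQpsd, htrle, hDle, by rw [hRval, hRtarget]⟩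
  exact le_csSup hbdd hmem
end

section
/- Unit-rank channels, achievability (Theorem 3, lower bound): Let N_a ≥ 1 and n ≥ 1 be integers, σ_b, σ_w, λ_b, λ_w, δ, P > 0 real numbers, and let u_b, u_w ∈ ℂ^{N_a} be unit vectors with c := |⟨u_w, u_b⟩|² > 0. Let W_b := λ_b • (outer product of u_b with itself) and W_w := λ_w • (outer product of u_w with itself). Define C_pd(δ) := sSup { R(Q) : Q an N_a×N_a complex Hermitian positive semidefinite matrix with (Q.trace).re ≤ P and n·D(W_w, Q) ≤ 2δ² }. Then C_pd(δ) ≥ min { Real.log(1 + √2·σ_w²·δ·λ_b/(σ_b²·λ_w·c·√n)), Real.log(1 + λ_b·P/σ_b²) }. -/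
open Matrix
open scoped ComplexOrder InnerProductSpace

/-- The outer product `u uᴴ` of a vector with itself, with `(i,j)` entry `u i * conj (u j)`. -/
noncomputable def outer {Na : ℕ} (u : EuclideanSpace ℂ (Fin Na)) :
    Matrix (Fin Na) (Fin Na) ℂ :=
  Matrix.of fun i j => u i * star (u j)

section Aux

variable {m : Type*} [Fintype m] [DecidableEq m]

/-- The rank-one matrix `u vᴴ` as `col * row`. -/
noncomputable def Kmat (u v : m → ℂ) : Matrix m m ℂ :=
  replicateCol Unit u * replicateRow Unit (star v)

lemma Kmat_apply (u v : m → ℂ) (i j : m) : Kmat u v i j = u i * star (v j) := by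
  simp [Kmat, mul_apply]

lemma Kmat_mul_Kmat (u v u' v' : m → ℂ) :
    Kmat u v * Kmat u' v' = (star v ⬝ᵥ u') • Kmat u v' := by
  ext i j
  simp only [mul_apply, Kmat_apply, Matrix.smul_apply, smul_eq_mul, dotProduct, Finset.sum_mul]
  exact Finset.sum_congr rfl fun k _ => by simp [Pi.star_apply]; ring

lemma trace_Kmat (u v : m → ℂ) : (Kmat u v).trace = star v ⬝ᵥ u := by
  simp [Matrix.trace, Kmat_apply, dotProduct, mul_comm]

lemma det_one_add_smul_Kmat (z : ℂ) (u v : m → ℂ) :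
    (1 + z • Kmat u v).det = 1 + z * (star v ⬝ᵥ u) := by
  have : z • Kmat u v = replicateCol Unit (z • u) * replicateRow Unit (star v) := by
    rw [Kmat, replicateCol_smul, smul_mul]
  rw [this, det_one_add_replicateCol_mul_replicateRow]
  simp [dotProduct_smul, mul_comm]

lemma inv_one_add_smul_Kmat (z : ℂ) (u v : m → ℂ)
    (h : 1 + z * (star v ⬝ᵥ u) ≠ 0) :
    (1 + z • Kmat u v)⁻¹ = 1 - (z / (1 + z * (star v ⬝ᵥ u))) • Kmat u v := by
  set s : ℂ := star v ⬝ᵥ u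
  set w : ℂ := z / (1 + z * s)
  apply inv_eq_right_inv
  have hKK : Kmat u v * Kmat u v = s • Kmat u v := Kmat_mul_Kmat u v u v
  have expand : (1 + z • Kmat u v) * (1 - w • Kmat u v)
      = 1 + (z - w - z * w * s) • Kmat u v := by
    rw [mul_sub, mul_one, add_mul, one_mul, Matrix.mul_smul, Matrix.smul_mul, hKK]
    module
  have hw : z - w - z * w * s = 0 := by
    have : w * (1 + z * s) = z := div_mul_cancel₀ _ h
    linear_combination (-1 : ℂ) * this
  rw [expand, hw, zero_smul, add_zero]

lemma Kmat_posSemidef (u : m → ℂ) : (Kmat u u).PosSemidef := by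
  have : Kmat u u = replicateCol Unit u * (replicateCol Unit u)ᴴ := by rw [conjTranspose_replicateCol]; rfl
  rw [this]
  exact posSemidef_self_mul_conjTranspose _

lemma trace_re_nonneg {M : Matrix m m ℂ} (hM : M.PosSemidef) : 0 ≤ M.trace.re := by
  have h : ∀ i, 0 ≤ (M i i).re := by
    intro i
    have := hM.dotProduct_mulVec_nonneg (Pi.single i 1)
    rw [Complex.nonneg_iff] at this
    simpa [dotProduct, mulVec, Pi.single_apply, Finset.sum_ite_eq, Finset.sum_ite_eq'] using this.1
  simpa [Matrix.trace, Complex.re_sum] using Finset.sum_nonneg fun i _ => h i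

lemma one_sub_Kmat_posSemidef {Na : ℕ} (u : EuclideanSpace ℂ (Fin Na)) (hu : ‖u‖ = 1) :
    (1 - Kmat (u : Fin Na → ℂ) u).PosSemidef := by
  refine PosSemidef.of_dotProduct_mulVec_nonneg ?_ ?_
  · have h1 : (Kmat (u : Fin Na → ℂ) u).IsHermitian := (Kmat_posSemidef _).1
    exact isHermitian_one.sub h1
  · intro x
    set β : ℂ := star (u : Fin Na → ℂ) ⬝ᵥ x with hβ
    have hK : (Kmat (u : Fin Na → ℂ) u) *ᵥ x = β • (u : Fin Na → ℂ) := by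
      ext i
      simp only [Kmat, mulVec, mul_apply, dotProduct, Pi.smul_apply, smul_eq_mul, hβ,
        Finset.sum_mul, replicateCol_apply, replicateRow_apply, Pi.star_apply, Finset.univ_unique,
        Finset.sum_singleton]
      exact Finset.sum_congr rfl fun k _ => by ring
    have hux : star (x : Fin Na → ℂ) ⬝ᵥ (u : Fin Na → ℂ) = star β := by
      simp [hβ, dotProduct, Complex.star_def, map_sum]
      exact Finset.sum_congr rfl fun k _ => by ring
    have expand : star x ⬝ᵥ ((1 - Kmat (u : Fin Na → ℂ) u) *ᵥ x)
        = star x ⬝ᵥ x - β * star β := by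
      rw [sub_mulVec, dotProduct_sub, one_mulVec, hK, dotProduct_smul, hux, smul_eq_mul]
    rw [expand]
    have hcs : ‖β‖ ^ 2 ≤ ∑ i, ‖x i‖ ^ 2 := by
      have hβ' : β = ⟪u, (WithLp.equiv 2 _).symm x⟫_ℂ := by
        rw [EuclideanSpace.inner_eq_star_dotProduct, dotProduct_comm]; rfl
      have h1 : ‖β‖ ≤ ‖(WithLp.equiv 2 ((Fin Na) → ℂ)).symm x‖ := by
        calc ‖β‖ ≤ ‖u‖ * ‖(WithLp.equiv 2 ((Fin Na) → ℂ)).symm x‖ := by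
              rw [hβ']; exact norm_inner_le_norm _ _
          _ = _ := by rw [hu, one_mul]
      have h2 : ‖(WithLp.equiv 2 ((Fin Na) → ℂ)).symm x‖ ^ 2 = ∑ i, ‖x i‖ ^ 2 := by
        rw [EuclideanSpace.norm_eq, Real.sq_sqrt (Finset.sum_nonneg fun i _ => sq_nonneg _)]
        rfl
      calc ‖β‖ ^ 2 ≤ ‖(WithLp.equiv 2 ((Fin Na) → ℂ)).symm x‖ ^ 2 :=
            pow_le_pow_left₀ (norm_nonneg _) h1 2
        _ = _ := h2
    have hxx : star (x : Fin Na → ℂ) ⬝ᵥ x = ((∑ i, ‖x i‖ ^ 2 : ℝ) : ℂ) := by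
      push_cast
      simp only [dotProduct, Pi.star_apply]
      exact Finset.sum_congr rfl fun k _ => by
        rw [mul_comm, Complex.star_def, Complex.mul_conj']
        try norm_cast
    have hββ : β * star β = ((‖β‖ ^ 2 : ℝ) : ℂ) := by
      rw [Complex.star_def, Complex.mul_conj']
      norm_cast
    rw [hxx, hββ, ← Complex.ofReal_sub]
    rw [Complex.zero_le_real]
    linarith

open scoped MatrixOrder in
/-- Quadratic form of a PSD matrix at a unit vector is at most the trace. -/
lemma quad_re_le_trace_re {Na : ℕ} {Q : Matrix (Fin Na) (Fin Na) ℂ} (hQ : Q.PosSemidef)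
    (u : EuclideanSpace ℂ (Fin Na)) (hu : ‖u‖ = 1) :
    (star (u : Fin Na → ℂ) ⬝ᵥ Q *ᵥ (u : Fin Na → ℂ)).re ≤ Q.trace.re := by
  have hq : star (u : Fin Na → ℂ) ⬝ᵥ Q *ᵥ (u : Fin Na → ℂ)
      = (Q * Kmat (u : Fin Na → ℂ) u).trace := by
    simp only [Matrix.trace, Matrix.diag, mul_apply, Kmat_apply, dotProduct,
      mulVec, Pi.star_apply]
    refine Finset.sum_congr rfl fun i _ => ?_
    rw [Finset.mul_sum]
    exact Finset.sum_congr rfl fun j _ => by ring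
  set K := Kmat (u : Fin Na → ℂ) u
  set S := CFC.sqrt Q with hS
  have hSS : S * S = Q := CFC.sqrt_mul_sqrt_self Q hQ.nonneg
  have hSH : Sᴴ = S := (CFC.sqrt_nonneg Q).posSemidef.1
  have hpsd : (S * (1 - K) * Sᴴ).PosSemidef :=
    (one_sub_Kmat_posSemidef u hu).mul_mul_conjTranspose_same S
  have htr_eq : (Q * (1 - K)).trace = (S * (1 - K) * Sᴴ).trace := by
    rw [hSH, ← hSS, mul_assoc, trace_mul_comm, mul_assoc]
  have h0 : 0 ≤ (Q * (1 - K)).trace.re := htr_eq ▸ trace_re_nonneg hpsd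
  have hsub : (Q * (1 - K)).trace = Q.trace - (Q * K).trace := by
    rw [mul_sub, mul_one, trace_sub]
  rw [hq]
  rw [hsub, Complex.sub_re] at h0
  linarith

lemma realSmul_matrix (r : ℝ) (M : Matrix m m ℂ) : r • M = (r : ℂ) • M := by
  ext i j
  simp [Complex.real_smul]

lemma dotProduct_star_comm (u v : m → ℂ) : star v ⬝ᵥ u = star (star u ⬝ᵥ v) := by
  simp only [dotProduct, Pi.star_apply, star_sum, star_mul', star_star]
  exact Finset.sum_congr rfl fun k _ => by ring

lemma det_one_add_smul_Kmat_mul (t : ℂ) (u : m → ℂ) (Q : Matrix m m ℂ) :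
    (1 + t • (Kmat u u * Q)).det = 1 + t * (star u ⬝ᵥ Q *ᵥ u) := by
  have h : t • (Kmat u u * Q) = replicateCol Unit (t • u) * replicateRow Unit (star u ᵥ* Q) := by
    rw [Kmat, Matrix.mul_assoc, ← replicateRow_vecMul, replicateCol_smul, ← smul_mul]
  rw [h, det_one_add_replicateCol_mul_replicateRow, dotProduct_smul, smul_eq_mul, ← dotProduct_mulVec,
    mul_comm t]

end Aux

section Euclid

variable {Na : ℕ}

lemma outer_eq_Kmat (u : EuclideanSpace ℂ (Fin Na)) :
    outer u = Kmat (u : Fin Na → ℂ) u := by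
  ext i j
  simp [outer, Kmat_apply]

lemma dot_self_eq_one (u : EuclideanSpace ℂ (Fin Na)) (hu : ‖u‖ = 1) :
    star (u : Fin Na → ℂ) ⬝ᵥ (u : Fin Na → ℂ) = 1 := by
  have h : (⟪u, u⟫_ℂ) = star (u : Fin Na → ℂ) ⬝ᵥ (u : Fin Na → ℂ) := by
    rw [EuclideanSpace.inner_eq_star_dotProduct, dotProduct_comm]
  rw [← h, inner_self_eq_norm_sq_to_K, hu]
  norm_num

/-- The rate functional is bounded by the unconstrained capacity. -/
lemma Rfun_le (σb lb P : ℝ) (hσb : 0 < σb) (hlb : 0 < lb) (hP : 0 ≤ P)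
    (ub : EuclideanSpace ℂ (Fin Na)) (hub : ‖ub‖ = 1)
    {Q : Matrix (Fin Na) (Fin Na) ℂ} (hQ : Q.PosSemidef) (htr : Q.trace.re ≤ P) :
    Rfun σb ((lb : ℂ) • outer ub) Q ≤ Real.log (1 + lb * P / σb ^ 2) := by
  set q : ℂ := star (ub : Fin Na → ℂ) ⬝ᵥ Q *ᵥ (ub : Fin Na → ℂ) with hqdef
  have hq0 : 0 ≤ q := hQ.dotProduct_mulVec_nonneg _
  have him : q.im = 0 := ((Complex.nonneg_iff.mp hq0).2).symm
  have hre0 : 0 ≤ q.re := (Complex.nonneg_iff.mp hq0).1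
  have hqre : q = (q.re : ℂ) := Complex.ext (by simp) (by simp [him])
  set t : ℝ := (σb ^ 2)⁻¹ * lb with htdef
  have ht0 : 0 ≤ t := by positivity
  have hmat : (σb ^ 2)⁻¹ • (((lb : ℂ) • outer ub) * Q)
      = (t : ℂ) • (Kmat (ub : Fin Na → ℂ) ub * Q) := by
    rw [outer_eq_Kmat, Matrix.smul_mul, realSmul_matrix, smul_smul, htdef]
    push_cast
    ring_nf
  have hdet : ((1 : Matrix (Fin Na) (Fin Na) ℂ)
        + (σb ^ 2)⁻¹ • (((lb : ℂ) • outer ub) * Q)).det.re = 1 + t * q.re := by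
    rw [hmat, det_one_add_smul_Kmat_mul, ← hqdef, hqre]
    push_cast
    simp
  have hqP : q.re ≤ P := le_trans (quad_re_le_trace_re hQ ub hub) htr
  rw [Rfun, hdet]
  have h1 : (0:ℝ) < 1 + t * q.re := by positivity
  have h2 : 1 + t * q.re ≤ 1 + lb * P / σb ^ 2 := by
    have : t * q.re ≤ t * P := mul_le_mul_of_nonneg_left hqP ht0
    have ht : t * P = lb * P / σb ^ 2 := by rw [htdef]; ring
    linarith
  exact Real.log_le_log h1 h2

lemma posSemidef_smul_outer (p : ℝ) (hp : 0 ≤ p) (u : EuclideanSpace ℂ (Fin Na)) :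
    ((p : ℂ) • outer u).PosSemidef := by
  have h : (p : ℂ) • outer u
      = Kmat (fun k => (Real.sqrt p : ℂ) * u k) (fun k => (Real.sqrt p : ℂ) * u k) := by
    ext i j
    rw [Kmat_apply]
    simp only [outer, Matrix.smul_apply, Matrix.of_apply, smul_eq_mul, Pi.star_apply,
      star_mul', Complex.star_def, Complex.conj_ofReal]
    have hss : ((Real.sqrt p : ℂ)) * (Real.sqrt p : ℂ) = (p : ℂ) := by
      norm_cast
      exact Real.mul_self_sqrt hp
    linear_combination (-1 : ℂ) * (u i * (starRingEnd ℂ) (u j)) * hss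
  rw [h]
  exact Kmat_posSemidef _

end Euclid


section Rankone

variable {Na : ℕ}

lemma matprod_rankone (σw lw p : ℝ) (uw ub : EuclideanSpace ℂ (Fin Na)) :
    (σw ^ 2)⁻¹ • (((lw : ℂ) • outer uw) * ((p : ℂ) • outer ub))
      = ((((σw ^ 2)⁻¹ * lw * p : ℝ) : ℂ)
            * (star (uw : Fin Na → ℂ) ⬝ᵥ (ub : Fin Na → ℂ)))
          • Kmat (uw : Fin Na → ℂ) (ub : Fin Na → ℂ) := by
  rw [outer_eq_Kmat, outer_eq_Kmat, Matrix.smul_mul, Matrix.mul_smul, Kmat_mul_Kmat,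
    realSmul_matrix, smul_smul, smul_smul, smul_smul]
  congr 1
  push_cast
  ring

lemma Dfun_rankone (σw lw p : ℝ) (uw ub : EuclideanSpace ℂ (Fin Na))
    (h1x : (0:ℝ) < 1 + (σw ^ 2)⁻¹ * lw * p * ‖(⟪uw, ub⟫_ℂ)‖ ^ 2) :
    Dfun σw ((lw : ℂ) • outer uw) ((p : ℂ) • outer ub)
      = Real.log (1 + (σw ^ 2)⁻¹ * lw * p * ‖(⟪uw, ub⟫_ℂ)‖ ^ 2)
        - ((σw ^ 2)⁻¹ * lw * p * ‖(⟪uw, ub⟫_ℂ)‖ ^ 2)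
          / (1 + (σw ^ 2)⁻¹ * lw * p * ‖(⟪uw, ub⟫_ℂ)‖ ^ 2) := by
  have hnorm : star (uw : Fin Na → ℂ) ⬝ᵥ (ub : Fin Na → ℂ) = (⟪uw, ub⟫_ℂ) := by
    rw [EuclideanSpace.inner_eq_star_dotProduct, dotProduct_comm]
  have hs : star (ub : Fin Na → ℂ) ⬝ᵥ (uw : Fin Na → ℂ)
      = star (star (uw : Fin Na → ℂ) ⬝ᵥ (ub : Fin Na → ℂ)) :=
    dotProduct_star_comm _ _
  have hmc : (star (uw : Fin Na → ℂ) ⬝ᵥ (ub : Fin Na → ℂ))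
        * star (star (uw : Fin Na → ℂ) ⬝ᵥ (ub : Fin Na → ℂ))
      = ((‖(⟪uw, ub⟫_ℂ)‖ ^ 2 : ℝ) : ℂ) := by
    rw [hnorm, Complex.star_def, Complex.mul_conj']
    norm_cast
  have hzs : ((((σw ^ 2)⁻¹ * lw * p : ℝ) : ℂ)
        * (star (uw : Fin Na → ℂ) ⬝ᵥ (ub : Fin Na → ℂ)))
        * (star (ub : Fin Na → ℂ) ⬝ᵥ (uw : Fin Na → ℂ))
      = (((σw ^ 2)⁻¹ * lw * p * ‖(⟪uw, ub⟫_ℂ)‖ ^ 2 : ℝ) : ℂ) := by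
    rw [hs, mul_assoc, hmc]
    push_cast
    ring
  have hne : (1 : ℂ) + ((((σw ^ 2)⁻¹ * lw * p : ℝ) : ℂ)
        * (star (uw : Fin Na → ℂ) ⬝ᵥ (ub : Fin Na → ℂ)))
        * (star (ub : Fin Na → ℂ) ⬝ᵥ (uw : Fin Na → ℂ)) ≠ 0 := by
    rw [hzs, show (1 : ℂ) + (((σw ^ 2)⁻¹ * lw * p * ‖(⟪uw, ub⟫_ℂ)‖ ^ 2 : ℝ) : ℂ)
        = (((1 + (σw ^ 2)⁻¹ * lw * p * ‖(⟪uw, ub⟫_ℂ)‖ ^ 2 : ℝ)) : ℂ) by push_cast; ring]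
    exact_mod_cast ne_of_gt h1x
  rw [Dfun, matprod_rankone, det_one_add_smul_Kmat, inv_one_add_smul_Kmat _ _ _ hne,
    trace_sub, trace_smul, trace_Kmat, trace_one, smul_eq_mul, div_mul_eq_mul_div, hzs]
  rw [show (1 : ℂ) + (((σw ^ 2)⁻¹ * lw * p * ‖(⟪uw, ub⟫_ℂ)‖ ^ 2 : ℝ) : ℂ)
      = (((1 + (σw ^ 2)⁻¹ * lw * p * ‖(⟪uw, ub⟫_ℂ)‖ ^ 2 : ℝ)) : ℂ) by push_cast; ring,
    ← Complex.ofReal_div]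
  simp only [Complex.ofReal_re, Complex.sub_re, Complex.natCast_re, Fintype.card_fin]
  ring

lemma Rfun_rankone (σb lb p : ℝ) (ub : EuclideanSpace ℂ (Fin Na)) (hub : ‖ub‖ = 1) :
    Rfun σb ((lb : ℂ) • outer ub) ((p : ℂ) • outer ub)
      = Real.log (1 + (σb ^ 2)⁻¹ * lb * p) := by
  rw [Rfun, matprod_rankone, det_one_add_smul_Kmat, dot_self_eq_one ub hub, mul_one, mul_one,
    show (1 : ℂ) + (((σb ^ 2)⁻¹ * lb * p : ℝ) : ℂ) = (((1 + (σb ^ 2)⁻¹ * lb * p : ℝ)) : ℂ) by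
      push_cast; ring,
    Complex.ofReal_re]

lemma trace_smul_outer (p : ℝ) (u : EuclideanSpace ℂ (Fin Na)) (hu : ‖u‖ = 1) :
    (((p : ℂ) • outer u).trace).re = p := by
  rw [outer_eq_Kmat, trace_smul, trace_Kmat, dot_self_eq_one u hu]
  simp

end Rankone

/-- **Unit-rank channels, achievability (Theorem 3, lower bound).**
For unit-rank Bob and Willie Gram matrices `W_b = lb • u_b u_bᴴ`, `W_w = lw • u_w u_wᴴ`
(with eigenvalues `lb = λ_b`, `lw = λ_w`) and `c = |⟨u_w, u_b⟩|² > 0`, the `δ`-PD constrained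
capacity is at least the minimum of `log(1 + √2·σ_w²·δ·λ_b/(σ_b²·λ_w·c·√n))` and the
unconstrained capacity `log(1 + λ_b·P/σ_b²)`. -/
theorem unit_rank_achievability (Na n : ℕ) (hNa : 1 ≤ Na) (hn : 1 ≤ n)
    (σb σw lb lw δ P : ℝ) (hσb : 0 < σb) (hσw : 0 < σw) (hlb : 0 < lb) (hlw : 0 < lw)
    (hδ : 0 < δ) (hP : 0 < P)
    (ub uw : EuclideanSpace ℂ (Fin Na)) (hub : ‖ub‖ = 1) (huw : ‖uw‖ = 1)
    (hc : 0 < ‖(⟪uw, ub⟫_ℂ)‖ ^ 2) :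
    min (Real.log (1 + Real.sqrt 2 * σw ^ 2 * δ * lb /
          (σb ^ 2 * lw * ‖(⟪uw, ub⟫_ℂ)‖ ^ 2 * Real.sqrt n)))
        (Real.log (1 + lb * P / σb ^ 2))
      ≤ sSup {r : ℝ | ∃ Q : Matrix (Fin Na) (Fin Na) ℂ, Q.PosSemidef ∧
          (Q.trace).re ≤ P ∧
          (n : ℝ) * Dfun σw ((lw : ℂ) • outer uw) Q ≤ 2 * δ ^ 2 ∧
          r = Rfun σb ((lb : ℂ) • outer ub) Q} := by
  have hc' : (0:ℝ) < ‖(⟪uw, ub⟫_ℂ)‖ ^ 2 := hc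
  set c : ℝ := ‖(⟪uw, ub⟫_ℂ)‖ ^ 2 with hcdef
  have hn0 : (0:ℝ) < n := by exact_mod_cast Nat.lt_of_lt_of_le Nat.zero_lt_one hn
  have hsqn : 0 < Real.sqrt n := Real.sqrt_pos.mpr hn0
  have hsq2 : 0 < Real.sqrt 2 := by positivity
  set p0 : ℝ := Real.sqrt 2 * σw ^ 2 * δ / (lw * c * Real.sqrt n) with hp0def
  have hp0 : 0 < p0 := by rw [hp0def]; positivity
  set p : ℝ := min P p0 with hpdef
  have hp : 0 < p := lt_min hP hp0
  set x : ℝ := (σw ^ 2)⁻¹ * lw * p * c with hxdef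
  have hx0 : 0 ≤ x := by rw [hxdef]; positivity
  have h1x : (0:ℝ) < 1 + x := by linarith
  -- the chosen input covariance
  set Q0 : Matrix (Fin Na) (Fin Na) ℂ := ((p : ℝ) : ℂ) • outer ub with hQ0def
  have hQ0psd : Q0.PosSemidef := posSemidef_smul_outer p hp.le ub
  have hQ0tr : (Q0.trace).re ≤ P := by
    rw [hQ0def, trace_smul_outer p ub hub]
    exact min_le_left _ _
  -- the detection constraint
  have hxle : x ≤ Real.sqrt 2 * δ / Real.sqrt n := by
    have hple : p ≤ p0 := min_le_right _ _
    have heq : (σw ^ 2)⁻¹ * lw * p0 * c = Real.sqrt 2 * δ / Real.sqrt n := by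
      rw [hp0def]
      field_simp
    have hmono : (σw ^ 2)⁻¹ * lw * p * c ≤ (σw ^ 2)⁻¹ * lw * p0 * c := by
      have h1 : (0:ℝ) ≤ (σw ^ 2)⁻¹ * lw := by positivity
      nlinarith
    rw [hxdef]
    linarith [heq ▸ hmono]
  have hDle : (n : ℝ) * Dfun σw ((lw : ℂ) • outer uw) Q0 ≤ 2 * δ ^ 2 := by
    rw [hQ0def, Dfun_rankone σw lw p uw ub (by rw [← hcdef, ← hxdef]; exact h1x), ← hcdef,
      ← hxdef]
    have hlog : Real.log (1 + x) ≤ x := by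
      have := Real.log_le_sub_one_of_pos h1x
      linarith
    have hfrac : x - x / (1 + x) = x ^ 2 / (1 + x) := by
      field_simp
      ring
    have hdiv : x ^ 2 / (1 + x) ≤ x ^ 2 := div_le_self (sq_nonneg x) (by linarith)
    have hg : Real.log (1 + x) - x / (1 + x) ≤ x ^ 2 := by linarith
    have hxsq : x ^ 2 ≤ 2 * δ ^ 2 / n :=
      calc x ^ 2 ≤ (Real.sqrt 2 * δ / Real.sqrt n) ^ 2 := by
            apply pow_le_pow_left₀ hx0 hxle
        _ = 2 * δ ^ 2 / n := by
            rw [div_pow, mul_pow, Real.sq_sqrt (by norm_num : (0:ℝ) ≤ 2),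
              Real.sq_sqrt hn0.le]
    calc (n : ℝ) * (Real.log (1 + x) - x / (1 + x)) ≤ (n : ℝ) * (x ^ 2) :=
          mul_le_mul_of_nonneg_left hg hn0.le
      _ ≤ (n : ℝ) * (2 * δ ^ 2 / n) := mul_le_mul_of_nonneg_left hxsq hn0.le
      _ = 2 * δ ^ 2 := by field_simp
  -- the achieved rate
  have hrate : Rfun σb ((lb : ℂ) • outer ub) Q0 = Real.log (1 + (σb ^ 2)⁻¹ * lb * p) := by
    rw [hQ0def, Rfun_rankone σb lb p ub hub]
  have hmem : Rfun σb ((lb : ℂ) • outer ub) Q0 ∈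
      {r : ℝ | ∃ Q : Matrix (Fin Na) (Fin Na) ℂ, Q.PosSemidef ∧
          (Q.trace).re ≤ P ∧
          (n : ℝ) * Dfun σw ((lw : ℂ) • outer uw) Q ≤ 2 * δ ^ 2 ∧
          r = Rfun σb ((lb : ℂ) • outer ub) Q} :=
    ⟨Q0, hQ0psd, hQ0tr, hDle, rfl⟩
  have hBdd : BddAbove {r : ℝ | ∃ Q : Matrix (Fin Na) (Fin Na) ℂ, Q.PosSemidef ∧
      (Q.trace).re ≤ P ∧
      (n : ℝ) * Dfun σw ((lw : ℂ) • outer uw) Q ≤ 2 * δ ^ 2 ∧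
      r = Rfun σb ((lb : ℂ) • outer ub) Q} := by
    refine ⟨Real.log (1 + lb * P / σb ^ 2), ?_⟩
    rintro r ⟨Q, hQ, htr, -, rfl⟩
    exact Rfun_le σb lb P hσb hlb hP.le ub hub hQ htr
  have hmin : min (Real.log (1 + Real.sqrt 2 * σw ^ 2 * δ * lb /
        (σb ^ 2 * lw * c * Real.sqrt n)))
      (Real.log (1 + lb * P / σb ^ 2)) ≤ Rfun σb ((lb : ℂ) • outer ub) Q0 := by
    rw [hrate]
    rcases le_total P p0 with hle | hle
    · have hpP : p = P := min_eq_left hle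
      have harg : (σb ^ 2)⁻¹ * lb * p = lb * P / σb ^ 2 := by rw [hpP]; ring
      rw [harg]
      exact min_le_right _ _
    · have hpP : p = p0 := min_eq_right hle
      have harg : (σb ^ 2)⁻¹ * lb * p
          = Real.sqrt 2 * σw ^ 2 * δ * lb / (σb ^ 2 * lw * c * Real.sqrt n) := by
        rw [hpP, hp0def]
        field_simp
      rw [harg]
      exact min_le_left _ _
  exact le_trans hmin (le_csSup hBdd hmem)
end

section
/- Covert rate without shared secret, achievability (Theorem 6, lower bound): Let N_a ≥ 1 and n ≥ 1 be integers, σ_b, σ_w, γ_w, δ, P > 0 real numbers, and let W_b be an N_a×N_a complex Hermitian positive semidefinite matrix of rank N whose nonzero eigenvalues are λ_1, …, λ_N > 0. Assume 2·N·σ_w²·δ²/(γ_w·n·N_a) ≤ P. Define Ĉ_pd(δ) := sSup { R(Q) : Q an N_a×N_a complex Hermitian positive semidefinite matrix with (Q.trace).re ≤ P and Real.log((det(1 + (γ_w/σ_w²) • Q)).re) ≤ 2δ²/n }. Then Ĉ_pd(δ) ≥ Σ_{i=1}^{N} Real.log(1 + 2·σ_w²·δ²·λ_i/(σ_b²·γ_w·n·N_a)).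 -/
open Matrix
open scoped ComplexOrder

variable {m : ℕ}

lemma conj_det (U X : Matrix (Fin m) (Fin m) ℂ) (hU : U ∈ Matrix.unitaryGroup (Fin m) ℂ) :
    (U * X * star U).det = X.det := by
  rw [Matrix.det_mul, Matrix.det_mul, mul_comm U.det X.det, mul_assoc, ← Matrix.det_mul,
    (Matrix.mem_unitaryGroup_iff).mp hU, Matrix.det_one, mul_one]

lemma one_add_smul_conj (U : Matrix (Fin m) (Fin m) ℂ)
    (hU : U ∈ Matrix.unitaryGroup (Fin m) ℂ) (v : Fin m → ℝ) (a : ℝ) :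
    1 + a • (U * Matrix.diagonal (fun i => (v i : ℂ)) * star U)
      = U * Matrix.diagonal (fun i => ((1 + a * v i : ℝ) : ℂ)) * star U := by
  have hd : Matrix.diagonal (fun i => ((1 + a * v i : ℝ) : ℂ))
      = 1 + a • Matrix.diagonal (fun i => (v i : ℂ)) := by
    ext i j
    by_cases h : i = j
    · subst h
      simp [Matrix.diagonal_apply_eq, Matrix.one_apply_eq, Complex.real_smul]
    · simp [Matrix.diagonal_apply_ne _ h, Matrix.one_apply_ne h]
  rw [hd, Matrix.mul_add, Matrix.add_mul, mul_one, (Matrix.mem_unitaryGroup_iff).mp hU,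
    Matrix.mul_smul, Matrix.smul_mul]

lemma conj_trace (U : Matrix (Fin m) (Fin m) ℂ)
    (hU : U ∈ Matrix.unitaryGroup (Fin m) ℂ) (v : Fin m → ℝ) :
    (U * Matrix.diagonal (fun i => (v i : ℂ)) * star U).trace = ((∑ i, v i : ℝ) : ℂ) := by
  rw [Matrix.trace_mul_cycle, (Matrix.mem_unitaryGroup_iff').mp hU, one_mul,
    Matrix.trace_diagonal]
  push_cast; rfl

lemma conj_psd (U : Matrix (Fin m) (Fin m) ℂ) (v : Fin m → ℝ) (hv : ∀ i, 0 ≤ v i) :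
    (U * Matrix.diagonal (fun i => (v i : ℂ)) * star U).PosSemidef := by
  rw [Matrix.star_eq_conjTranspose]
  exact (Matrix.posSemidef_diagonal_iff.mpr fun i => by
    exact_mod_cast Complex.zero_le_real.mpr (hv i)).mul_mul_conjTranspose_same U

lemma det_one_add_smul_conj (U : Matrix (Fin m) (Fin m) ℂ)
    (hU : U ∈ Matrix.unitaryGroup (Fin m) ℂ) (v : Fin m → ℝ) (a : ℝ) :
    (1 + a • (U * Matrix.diagonal (fun i => (v i : ℂ)) * star U)).det
      = ((∏ i, (1 + a * v i) : ℝ) : ℂ) := by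
  rw [one_add_smul_conj U hU v a, conj_det _ _ hU, Matrix.det_diagonal]
  push_cast; rfl
variable {m : ℕ}

lemma herm_diag_cast {A : Matrix (Fin m) (Fin m) ℂ} (hA : A.IsHermitian) :
    Matrix.diagonal (RCLike.ofReal ∘ hA.eigenvalues)
      = Matrix.diagonal (fun i => ((hA.eigenvalues i : ℝ) : ℂ)) := rfl

lemma herm_trace {A : Matrix (Fin m) (Fin m) ℂ} (hA : A.IsHermitian) :
    A.trace = ((∑ i, hA.eigenvalues i : ℝ) : ℂ) := by
  conv_lhs => rw [hA.spectral_theorem, herm_diag_cast hA]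
  rw [Unitary.conjStarAlgAut_apply, Matrix.trace_mul_cycle, (Matrix.mem_unitaryGroup_iff').mp hA.eigenvectorUnitary.2,
    one_mul, Matrix.trace_diagonal]
  push_cast; rfl

lemma psd_diag_re {M : Matrix (Fin m) (Fin m) ℂ} (hM : M.PosSemidef) (i : Fin m) :
    0 ≤ (M i i).re := by
  have := hM.re_dotProduct_nonneg (Pi.single i 1)
  simpa [dotProduct, Pi.single_apply] using this

lemma psd_trace_re {M : Matrix (Fin m) (Fin m) ℂ} (hM : M.PosSemidef) :
    0 ≤ M.trace.re := by
  rw [Matrix.trace, Complex.re_sum]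
  exact Finset.sum_nonneg fun i _ => psd_diag_re hM i

lemma psd_smul {M : Matrix (Fin m) (Fin m) ℂ} (hM : M.PosSemidef) {a : ℝ} (ha : 0 ≤ a) :
    (a • M).PosSemidef := by
  refine ⟨?_, fun x => ?_⟩
  · unfold Matrix.IsHermitian
    rw [Matrix.conjTranspose_smul, hM.1.eq, star_trivial]
  · have h := hM.2 x
    have e : (x.sum fun i xi => x.sum fun j xj => star xi * (a • M) i j * xj)
        = (a : ℂ) * (x.sum fun i xi => x.sum fun j xj => star xi * M i j * xj) := by
      rw [Finsupp.mul_sum]; refine Finset.sum_congr rfl fun i _ => ?_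
      dsimp only; rw [Finsupp.mul_sum]; refine Finset.sum_congr rfl fun j _ => ?_
      dsimp only; rw [Matrix.smul_apply, Complex.real_smul]; ring
    rw [e]
    exact mul_nonneg (by exact_mod_cast Complex.zero_le_real.mpr ha) h

open scoped MatrixOrder in
lemma psd_mul_trace {A B : Matrix (Fin m) (Fin m) ℂ} (hA : A.PosSemidef) (hB : B.PosSemidef) :
    0 ≤ (A * B).trace.re := by
  have hs := CFC.sqrt_mul_sqrt_self B hB.nonneg
  have hH : (CFC.sqrt B).conjTranspose = CFC.sqrt B := (CFC.sqrt_nonneg B).posSemidef.1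
  have h1 : (A * B).trace = (CFC.sqrt B * A * CFC.sqrt B).trace := by
    rw [Matrix.trace_mul_cycle, hs, Matrix.trace_mul_comm]
  rw [h1]
  have : (CFC.sqrt B * A * CFC.sqrt B).PosSemidef := by
    have := hA.mul_mul_conjTranspose_same (CFC.sqrt B)
    rwa [hH] at this
  exact psd_trace_re this

lemma loewner_trace {Q : Matrix (Fin m) (Fin m) ℂ} (hQ : Q.PosSemidef) :
    (Q.trace.re • (1 : Matrix (Fin m) (Fin m) ℂ) - Q).PosSemidef := by
  set t : ℝ := Q.trace.re with ht
  have htr : t = ∑ i, hQ.1.eigenvalues i := by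
    rw [ht, herm_trace hQ.1]; simp
  have hU := hQ.1.eigenvectorUnitary.2
  set U : Matrix (Fin m) (Fin m) ℂ := (hQ.1.eigenvectorUnitary : Matrix (Fin m) (Fin m) ℂ) with hUdef
  have key : t • (1 : Matrix (Fin m) (Fin m) ℂ) - Q
      = U * Matrix.diagonal (fun i => ((t - hQ.1.eigenvalues i : ℝ) : ℂ)) * star U := by
    have hsplit : Matrix.diagonal (fun i => ((t - hQ.1.eigenvalues i : ℝ) : ℂ))
        = t • (1 : Matrix (Fin m) (Fin m) ℂ)
          - Matrix.diagonal (fun i => ((hQ.1.eigenvalues i : ℝ) : ℂ)) := by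
      ext i j
      by_cases h : i = j
      · subst h
        simp [Matrix.diagonal_apply_eq, Matrix.one_apply_eq, Complex.real_smul]
      · simp [Matrix.diagonal_apply_ne _ h, Matrix.one_apply_ne h]
    rw [hsplit, Matrix.mul_sub, Matrix.sub_mul, Matrix.mul_smul, Matrix.smul_mul, mul_one,
      (Matrix.mem_unitaryGroup_iff).mp hU]
    congr 1
    conv_lhs => rw [hQ.1.spectral_theorem, herm_diag_cast hQ.1, Unitary.conjStarAlgAut_apply]
  rw [key]
  refine conj_psd U _ fun i => ?_
  rw [sub_nonneg, htr]
  exact Finset.single_le_sum (fun j _ => hQ.eigenvalues_nonneg j) (Finset.mem_univ i)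

lemma trace_mul_le {A Q : Matrix (Fin m) (Fin m) ℂ} (hA : A.PosSemidef) (hQ : Q.PosSemidef) :
    (A * Q).trace.re ≤ Q.trace.re * A.trace.re := by
  have h0 := psd_mul_trace hA (loewner_trace hQ)
  have hexp : A * (Q.trace.re • (1 : Matrix (Fin m) (Fin m) ℂ) - Q)
      = Q.trace.re • A - A * Q := by
    rw [Matrix.mul_sub, Matrix.mul_smul, mul_one]
  rw [hexp, Matrix.trace_sub, Matrix.trace_smul, Complex.sub_re] at h0
  have : (Q.trace.re • A.trace).re = Q.trace.re * A.trace.re := by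
    simp [Complex.real_smul, Complex.mul_re]
  linarith [h0, this ▸ h0]


open scoped MatrixOrder in
lemma rfun_le {σb P : ℝ} (hσb : 0 < σb) {Wb Q : Matrix (Fin m) (Fin m) ℂ}
    (hWb : Wb.PosSemidef) (hQ : Q.PosSemidef) (htr : Q.trace.re ≤ P) :
    Rfun σb Wb Q ≤ (σb ^ 2)⁻¹ * (P * Wb.trace.re) := by
  set r : ℝ := (σb ^ 2)⁻¹ with hr
  have hr0 : 0 ≤ r := by positivity
  set s : Matrix (Fin m) (Fin m) ℂ := CFC.sqrt Q with hsdef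
  have hs : s * s = Q := CFC.sqrt_mul_sqrt_self Q hQ.nonneg
  have hsH : sᴴ = s := (CFC.sqrt_nonneg Q).posSemidef.1
  set M : Matrix (Fin m) (Fin m) ℂ := r • (s * Wb * s) with hM
  have hMpsd : M.PosSemidef := by
    refine psd_smul ?_ hr0
    have := hWb.mul_mul_conjTranspose_same s
    rwa [hsH] at this
  have hdet : (1 + r • (Wb * Q)).det = (1 + M).det := by
    rw [← hs, ← Matrix.mul_assoc, ← smul_mul_assoc, Matrix.det_one_add_mul_comm,
      Matrix.mul_smul, ← Matrix.mul_assoc, hM]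
  have hMdet : (1 + M).det = ((∏ i, (1 + 1 * hMpsd.1.eigenvalues i) : ℝ) : ℂ) := by
    conv_lhs => rw [← one_smul ℝ M, hMpsd.1.spectral_theorem, herm_diag_cast hMpsd.1,
      Unitary.conjStarAlgAut_apply]
    exact det_one_add_smul_conj _ hMpsd.1.eigenvectorUnitary.2 _ 1
  have hν : ∀ i, 0 ≤ hMpsd.1.eigenvalues i := fun i => hMpsd.eigenvalues_nonneg i
  have hdet_re : (1 + r • (Wb * Q)).det.re = ∏ i, (1 + hMpsd.1.eigenvalues i) := by
    rw [hdet, hMdet, Complex.ofReal_re]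
    simp
  have hlog : Rfun σb Wb Q = Real.log (∏ i, (1 + hMpsd.1.eigenvalues i)) := by
    rw [Rfun, ← hr, hdet_re]
  rw [hlog, Real.log_prod (fun i _ => by nlinarith [hν i])]
  have hsum : ∑ i, Real.log (1 + hMpsd.1.eigenvalues i) ≤ ∑ i, hMpsd.1.eigenvalues i := by
    refine Finset.sum_le_sum fun i _ => ?_
    have := Real.log_le_sub_one_of_pos (x := 1 + hMpsd.1.eigenvalues i) (by nlinarith [hν i])
    linarith
  have htrM : ∑ i, hMpsd.1.eigenvalues i = M.trace.re := by
    rw [herm_trace hMpsd.1, Complex.ofReal_re]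
  have htrM2 : M.trace.re = r * (Wb * Q).trace.re := by
    rw [hM, Matrix.trace_smul]
    have : (s * Wb * s).trace = (Wb * Q).trace := by
      rw [Matrix.trace_mul_cycle, hs, Matrix.trace_mul_comm]
    rw [this]
    simp [Complex.real_smul, Complex.mul_re]
  have hfin : (Wb * Q).trace.re ≤ P * Wb.trace.re := by
    have h1 := trace_mul_le hWb hQ
    have h2 : Q.trace.re * Wb.trace.re ≤ P * Wb.trace.re :=
      mul_le_mul_of_nonneg_right htr (psd_trace_re hWb)
    linarith
  calc ∑ i, Real.log (1 + hMpsd.1.eigenvalues i) ≤ M.trace.re := by rw [← htrM]; exact hsum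
    _ = r * (Wb * Q).trace.re := htrM2
    _ ≤ r * (P * Wb.trace.re) := mul_le_mul_of_nonneg_left hfin hr0


lemma conj_mul_conj {m : ℕ} (U : Matrix (Fin m) (Fin m) ℂ)
    (hU : U ∈ Matrix.unitaryGroup (Fin m) ℂ) (v w : Fin m → ℂ) :
    (U * Matrix.diagonal v * star U) * (U * Matrix.diagonal w * star U)
      = U * Matrix.diagonal (fun i => v i * w i) * star U := by
  have h1 : star U * (U * Matrix.diagonal w * star U) = Matrix.diagonal w * star U := by
    rw [Matrix.mul_assoc U, ← Matrix.mul_assoc (star U),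
      (Matrix.mem_unitaryGroup_iff').mp hU, one_mul]
  rw [Matrix.mul_assoc (U * Matrix.diagonal v), h1, ← Matrix.mul_assoc,
    Matrix.mul_assoc U, Matrix.diagonal_mul_diagonal]


/-- **Covert rate without shared secret, achievability (Theorem 6, lower bound).**
Without a shared secret the covertness constraint bounds Willie's channel capacity:
`log (det (1 + (γ_w/σ_w²) Q)).re ≤ 2δ²/n`.  If `W_b` is Hermitian PSD of rank `N` with
positive eigenvalues `λ_1, …, λ_N` and `2·N·σ_w²·δ²/(γ_w·n·N_a) ≤ P`, then the corresponding
capacity `Ĉ_pd(δ)` is at least `Σ_i log(1 + 2·σ_w²·δ²·λ_i/(σ_b²·γ_w·n·N_a))`. -/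
theorem covert_rate_no_secret_achievability (Na n N : ℕ) (hNa : 1 ≤ Na) (hn : 1 ≤ n)
    (σb σw γw δ P : ℝ) (hσb : 0 < σb) (hσw : 0 < σw) (hγw : 0 < γw)
    (hδ : 0 < δ) (hP : 0 < P)
    (Wb : Matrix (Fin Na) (Fin Na) ℂ) (hWb : Wb.PosSemidef) (hrank : Wb.rank = N)
    (lam : Fin N → ℝ) (hlam : ∀ i, 0 < lam i)
    (heig : Multiset.map lam Finset.univ.val + Multiset.replicate (Na - N) 0
      = Multiset.map hWb.1.eigenvalues Finset.univ.val)
    (hPth : 2 * N * σw ^ 2 * δ ^ 2 / (γw * ((n : ℝ) * Na)) ≤ P) :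
    ∑ i : Fin N,
        Real.log (1 + 2 * σw ^ 2 * δ ^ 2 * lam i / (σb ^ 2 * γw * ((n : ℝ) * Na)))
      ≤ sSup {r : ℝ | ∃ Q : Matrix (Fin Na) (Fin Na) ℂ, Q.PosSemidef ∧
          (Q.trace).re ≤ P ∧
          Real.log ((1 + (γw / σw ^ 2) • Q).det.re) ≤ 2 * δ ^ 2 / n ∧
          r = Rfun σb Wb Q} := by
  classical
  have hU := hWb.1.eigenvectorUnitary.2
  set μ : Fin Na → ℝ := hWb.1.eigenvalues with hμ
  set U : Matrix (Fin Na) (Fin Na) ℂ := (hWb.1.eigenvectorUnitary : Matrix (Fin Na) (Fin Na) ℂ)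
    with hUdef
  have hNa0 : (0:ℝ) < Na := by exact_mod_cast Nat.lt_of_lt_of_le Nat.zero_lt_one hNa
  have hn0 : (0:ℝ) < n := by exact_mod_cast Nat.lt_of_lt_of_le Nat.zero_lt_one hn
  set c : ℝ := 2 * σw ^ 2 * δ ^ 2 / (γw * ((n:ℝ) * Na)) with hc
  have hc0 : 0 < c := by rw [hc]; positivity
  set d : Fin Na → ℝ := fun i => if μ i = 0 then 0 else c with hd
  have hd0 : ∀ i, 0 ≤ d i := by
    intro i; rw [hd]; dsimp only; split
    · exact le_refl 0
    · exact hc0.le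
  set Q : Matrix (Fin Na) (Fin Na) ℂ := U * Matrix.diagonal (fun i => (d i : ℂ)) * star U
    with hQdef
  have hQpsd : Q.PosSemidef := conj_psd U d hd0
  have hcard : (Finset.univ.filter (fun i => ¬ μ i = 0)).card = N := by
    rw [← Fintype.card_subtype]
    exact (hrank ▸ hWb.1.rank_eq_card_non_zero_eigs).symm
  have hμ0 : ∀ i, 0 ≤ μ i := fun i => hWb.eigenvalues_nonneg i
  have hNle : (N:ℝ) ≤ (Na:ℝ) := by
    exact_mod_cast hrank ▸ Wb.rank_le_width
  have hsum_d : ∑ i, d i = N * c := by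
    rw [hd]
    rw [Finset.sum_ite]
    simp [Finset.sum_const, hcard, nsmul_eq_mul]
  have htrace : Q.trace.re ≤ P := by
    rw [hQdef, conj_trace U hU d, Complex.ofReal_re, hsum_d]
    calc (N:ℝ) * c = 2 * N * σw ^ 2 * δ ^ 2 / (γw * ((n : ℝ) * Na)) := by rw [hc]; ring
      _ ≤ P := hPth
  have hwillie : Real.log ((1 + (γw / σw ^ 2) • Q).det.re) ≤ 2 * δ ^ 2 / n := by
    rw [hQdef, det_one_add_smul_conj U hU d (γw / σw ^ 2), Complex.ofReal_re]
    have hfac : ∀ i, 0 < 1 + γw / σw ^ 2 * d i := by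
      intro i
      have h1 : 0 ≤ γw / σw ^ 2 * d i := mul_nonneg (by positivity) (hd0 i)
      linarith
    rw [Real.log_prod (fun i _ => (hfac i).ne')]
    have hac : γw / σw ^ 2 * c = 2 * δ ^ 2 / ((n:ℝ) * Na) := by
      rw [hc]; field_simp
    have hsummand : ∀ i, Real.log (1 + γw / σw ^ 2 * d i)
        = if μ i = 0 then 0 else Real.log (1 + 2 * δ ^ 2 / ((n:ℝ) * Na)) := by
      intro i; rw [hd]; dsimp only; split
      · simp
      · rw [hac]
    have hsum_log : ∑ i, (if μ i = 0 then (0:ℝ) else Real.log (1 + 2 * δ ^ 2 / ((n:ℝ) * Na)))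
        = (N:ℝ) * Real.log (1 + 2 * δ ^ 2 / ((n:ℝ) * Na)) := by
      rw [Finset.sum_ite]
      simp [Finset.sum_const, hcard, nsmul_eq_mul]
    rw [Finset.sum_congr rfl (fun i _ => hsummand i), hsum_log]
    have hx0 : 0 < 2 * δ ^ 2 / ((n:ℝ) * Na) := by positivity
    have hlog : Real.log (1 + 2 * δ ^ 2 / ((n:ℝ) * Na)) ≤ 2 * δ ^ 2 / ((n:ℝ) * Na) := by
      have := Real.log_le_sub_one_of_pos (show (0:ℝ) < 1 + 2 * δ ^ 2 / ((n:ℝ) * Na) by linarith)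
      linarith
    have hstep : (N:ℝ) * Real.log (1 + 2 * δ ^ 2 / ((n:ℝ) * Na))
        ≤ (Na:ℝ) * (2 * δ ^ 2 / ((n:ℝ) * Na)) := by
      calc (N:ℝ) * Real.log (1 + 2 * δ ^ 2 / ((n:ℝ) * Na))
          ≤ (N:ℝ) * (2 * δ ^ 2 / ((n:ℝ) * Na)) :=
            mul_le_mul_of_nonneg_left hlog (Nat.cast_nonneg N)
        _ ≤ (Na:ℝ) * (2 * δ ^ 2 / ((n:ℝ) * Na)) :=
            mul_le_mul_of_nonneg_right hNle hx0.le
    have heq : (Na:ℝ) * (2 * δ ^ 2 / ((n:ℝ) * Na)) = 2 * δ ^ 2 / n := by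
      field_simp
    linarith [hstep, heq ▸ hstep]
  have hWbQ : Wb * Q = U * Matrix.diagonal (fun i => ((c * μ i : ℝ) : ℂ)) * star U := by
    conv_lhs => rw [hWb.1.spectral_theorem, herm_diag_cast hWb.1, Unitary.conjStarAlgAut_apply]
    rw [hQdef, conj_mul_conj U hU _ _]
    refine congrArg (fun f => U * Matrix.diagonal f * star U) (funext fun i => ?_)
    by_cases h : μ i = 0
    · simp [hd, h]
    · simp only [hd, if_neg h]
      push_cast; ring
  have hRval : Rfun σb Wb Q = ∑ i, Real.log (1 + (σb ^ 2)⁻¹ * (c * μ i)) := by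
    rw [Rfun, hWbQ, det_one_add_smul_conj U hU _ ((σb ^ 2)⁻¹), Complex.ofReal_re]
    refine Real.log_prod (fun i _ => ?_)
    have h1 : 0 ≤ (σb ^ 2)⁻¹ * (c * μ i) := by
      have := hμ0 i; positivity
    linarith
  have hkey : ∑ i : Fin N,
      Real.log (1 + 2 * σw ^ 2 * δ ^ 2 * lam i / (σb ^ 2 * γw * ((n : ℝ) * Na)))
      = Rfun σb Wb Q := by
    rw [hRval]
    have hL : ∑ i : Fin N, Real.log (1 + (σb ^ 2)⁻¹ * (c * lam i))
        = (Multiset.map (fun x => Real.log (1 + (σb ^ 2)⁻¹ * (c * x)))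
            (Multiset.map lam Finset.univ.val)).sum := by
      rw [Multiset.map_map]; rfl
    have hR : ∑ i : Fin Na, Real.log (1 + (σb ^ 2)⁻¹ * (c * μ i))
        = (Multiset.map (fun x => Real.log (1 + (σb ^ 2)⁻¹ * (c * x)))
            (Multiset.map μ Finset.univ.val)).sum := by
      rw [Multiset.map_map]; rfl
    have hmain : ∑ i : Fin N, Real.log (1 + (σb ^ 2)⁻¹ * (c * lam i))
        = ∑ i : Fin Na, Real.log (1 + (σb ^ 2)⁻¹ * (c * μ i)) := by
      rw [hL, hR, ← heig, Multiset.map_add, Multiset.sum_add, Multiset.map_replicate]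
      simp
    rw [← hmain]
    refine Finset.sum_congr rfl fun i _ => ?_
    congr 1
    rw [hc]
    field_simp
  rw [hkey]
  refine le_csSup ⟨(σb ^ 2)⁻¹ * (P * Wb.trace.re), ?_⟩ ⟨Q, hQpsd, htrace, hwillie, rfl⟩
  rintro r ⟨Q', hQ', htr', -, rfl⟩
  exact rfun_le hσb hWb hQ' htr'
end

section
/- Unit-rank channels without shared secret, achievability (Theorem 7, lower bound): Let N_a ≥ 1 and n ≥ 1 be integers, σ_b, σ_w, λ_b, λ_w, δ, P > 0 real numbers, and let u_b, u_w ∈ ℂ^{N_a} be unit vectors with c := |⟨u_w, u_b⟩|² > 0. Let W_b := λ_b • (outer product of u_b with itself) and W_w := λ_w • (outer product of u_w with itself). Define Ĉ_pd(δ) := sSup { R(Q) : Q an N_a×N_a complex Hermitian positive semidefinite matrix with (Q.trace).re ≤ P and Real.log((det(1 + σ_w⁻² • W_w*Q)).re) ≤ 2δ²/n }. Then Ĉ_pd(δ) ≥ min { Real.log(1 + 2·σ_w²·δ²·λ_b/(σ_b²·λ_w·c·n)), Real.log(1 + λ_b·P/σ_b²) }. -/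
open Matrix
open scoped ComplexOrder InnerProductSpace

section Helpers
variable {Na : ℕ}

lemma inner_eq_dot (x y : EuclideanSpace ℂ (Fin Na)) :
    (⟪x, y⟫_ℂ) = star (x : Fin Na → ℂ) ⬝ᵥ (y : Fin Na → ℂ) := by
  simp [inner, dotProduct, mul_comm]

lemma det_one_add_smul_outer_mul (c : ℂ) (u : EuclideanSpace ℂ (Fin Na))
    (Q : Matrix (Fin Na) (Fin Na) ℂ) :
    (1 + c • (outer u * Q)).det
      = 1 + c * (star (u : Fin Na → ℂ) ⬝ᵥ (Q *ᵥ u)) := by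
  have h1 : outer u * Q = replicateCol Unit (u : Fin Na → ℂ) * replicateRow Unit (star (u : Fin Na → ℂ) ᵥ* Q) := by
    ext i j
    simp [outer, Matrix.mul_apply, vecMul, dotProduct, Finset.mul_sum, mul_assoc]
  rw [h1]
  have h2 : c • (replicateCol Unit (u : Fin Na → ℂ) * replicateRow Unit (star (u : Fin Na → ℂ) ᵥ* Q))
      = replicateCol Unit (c • (u : Fin Na → ℂ)) * replicateRow Unit (star (u : Fin Na → ℂ) ᵥ* Q) := by
    ext i j
    simp [Matrix.mul_apply, Finset.mul_sum, mul_assoc]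
  rw [h2, det_one_add_replicateCol_mul_replicateRow, dotProduct_smul, ← dotProduct_mulVec, smul_eq_mul]

lemma real_smul_helper (a l : ℝ) (u : EuclideanSpace ℂ (Fin Na))
    (Q : Matrix (Fin Na) (Fin Na) ℂ) :
    (a • (((l : ℂ)) • outer u * Q) : Matrix (Fin Na) (Fin Na) ℂ)
      = ((a * l : ℝ) : ℂ) • (outer u * Q) := by
  ext i j
  simp only [Matrix.smul_apply, Matrix.mul_apply, smul_eq_mul, Complex.real_smul,
    Complex.ofReal_mul, Finset.mul_sum]
  refine Finset.sum_congr rfl fun k _ => ?_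
  ring

lemma outer_mulVec (u : EuclideanSpace ℂ (Fin Na)) (w : Fin Na → ℂ) :
    outer u *ᵥ w = (star (u : Fin Na → ℂ) ⬝ᵥ w) • (u : Fin Na → ℂ) := by
  ext i
  simp [outer, mulVec, dotProduct, Finset.mul_sum, mul_assoc, mul_comm, mul_left_comm]

lemma outer_posSemidef (u : EuclideanSpace ℂ (Fin Na)) : (outer u).PosSemidef := by
  refine Matrix.PosSemidef.of_dotProduct_mulVec_nonneg ?_ ?_
  · ext i j
    simp [outer, Matrix.conjTranspose_apply, mul_comm]
  · intro x
    rw [outer_mulVec, dotProduct_smul]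
    have : star x ⬝ᵥ (u : Fin Na → ℂ) = star (star (u : Fin Na → ℂ) ⬝ᵥ x) := by
      simp [dotProduct, mul_comm]
    rw [smul_eq_mul, this, mul_comm]
    exact star_mul_self_nonneg ((star (u : Fin Na → ℂ)) ⬝ᵥ x)

lemma posSemidef_real_smul {M : Matrix (Fin Na) (Fin Na) ℂ} (hM : M.PosSemidef)
    {p : ℝ} (hp : 0 ≤ p) : (((p : ℂ)) • M).PosSemidef := by
  refine Matrix.PosSemidef.of_dotProduct_mulVec_nonneg ?_ ?_
  · unfold Matrix.IsHermitian
    rw [Matrix.conjTranspose_smul, hM.1]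
    congr 1
    simp [Complex.conj_ofReal]
  · intro x
    rw [Matrix.smul_mulVec, dotProduct_smul, smul_eq_mul]
    have h0 : (0 : ℂ) ≤ (p : ℂ) := by
      rw [Complex.le_def]
      simp [hp]
    exact mul_nonneg h0 (hM.dotProduct_mulVec_nonneg x)

lemma dot_le_trace {Q : Matrix (Fin Na) (Fin Na) ℂ} (hQ : Q.PosSemidef)
    (u : EuclideanSpace ℂ (Fin Na)) (hu : ‖u‖ = 1) :
    (star (u : Fin Na → ℂ) ⬝ᵥ (Q *ᵥ u)).re ≤ Q.trace.re := by
  obtain ⟨B, rfl⟩ : ∃ B : Matrix (Fin Na) (Fin Na) ℂ, Q = Bᴴ * B := by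
    open scoped MatrixOrder Matrix.Norms.L2Operator in
    exact CStarAlgebra.nonneg_iff_eq_star_mul_self.mp hQ.nonneg
  have key : star (u : Fin Na → ℂ) ⬝ᵥ ((Bᴴ * B) *ᵥ u)
      = star (B *ᵥ (u : Fin Na → ℂ)) ⬝ᵥ (B *ᵥ u) := by
    rw [← mulVec_mulVec, dotProduct_mulVec, star_mulVec]
  rw [key]
  have term : ∀ z : ℂ, (star z * z).re = Complex.normSq z := fun z => by
    rw [Complex.star_def, mul_comm, Complex.mul_conj, Complex.ofReal_re]
  have hdot : (star (B *ᵥ (u : Fin Na → ℂ)) ⬝ᵥ (B *ᵥ u)).re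
      = ∑ i, Complex.normSq ((B *ᵥ (u : Fin Na → ℂ)) i) := by
    simp only [dotProduct, Complex.re_sum, Pi.star_apply]
    exact Finset.sum_congr rfl fun i _ => term _
  have htr : (Bᴴ * B).trace.re = ∑ i, ∑ k, Complex.normSq (B i k) := by
    rw [Matrix.trace]
    simp only [Complex.re_sum, Matrix.diag_apply, Matrix.mul_apply, conjTranspose_apply]
    rw [Finset.sum_comm]
    refine Finset.sum_congr rfl fun i _ => ?_
    refine Finset.sum_congr rfl fun k _ => term _
  rw [hdot, htr]
  apply Finset.sum_le_sum
  intro i _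
  set v : EuclideanSpace ℂ (Fin Na) := WithLp.toLp 2 (fun k => star (B i k)) with hv
  have hinner : (⟪v, u⟫_ℂ) = (B *ᵥ (u : Fin Na → ℂ)) i := by
    simp [inner, hv, mulVec, dotProduct, mul_comm]
  have h1 : ‖(B *ᵥ (u : Fin Na → ℂ)) i‖ ≤ ‖v‖ := by
    calc ‖(B *ᵥ (u : Fin Na → ℂ)) i‖ = ‖(⟪v, u⟫_ℂ)‖ := by rw [hinner]
    _ ≤ ‖v‖ * ‖u‖ := norm_inner_le_norm v u
    _ = ‖v‖ := by rw [hu, mul_one]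
  have h2 : ‖v‖ ^ 2 = ∑ k, Complex.normSq (B i k) := by
    rw [EuclideanSpace.norm_eq, Real.sq_sqrt (by positivity)]
    congr 1; ext k
    simp [hv, Complex.sq_norm]
  calc Complex.normSq ((B *ᵥ (u : Fin Na → ℂ)) i)
      = ‖(B *ᵥ (u : Fin Na → ℂ)) i‖ ^ 2 := (Complex.sq_norm _).symm
    _ ≤ ‖v‖ ^ 2 := by
        apply sq_le_sq' <;> nlinarith [norm_nonneg ((B *ᵥ (u : Fin Na → ℂ)) i), norm_nonneg v]
    _ = _ := h2

end Helpers

/-- **Unit-rank channels without shared secret, achievability (Theorem 7, lower bound).**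
For unit-rank Gram matrices `W_b = lb • u_b u_bᴴ`, `W_w = lw • u_w u_wᴴ` with
`c = |⟨u_w, u_b⟩|² > 0`, the covert capacity `Ĉ_pd(δ)` without a shared secret (with the
covertness constraint `log (det (1 + σ_w⁻² W_w Q)).re ≤ 2δ²/n`) is at least the minimum of
`log(1 + 2·σ_w²·δ²·λ_b/(σ_b²·λ_w·c·n))` and the unconstrained capacity
`log(1 + λ_b·P/σ_b²)`. -/
theorem unit_rank_no_secret_achievability (Na n : ℕ) (hNa : 1 ≤ Na) (hn : 1 ≤ n)
    (σb σw lb lw δ P : ℝ) (hσb : 0 < σb) (hσw : 0 < σw) (hlb : 0 < lb) (hlw : 0 < lw)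
    (hδ : 0 < δ) (hP : 0 < P)
    (ub uw : EuclideanSpace ℂ (Fin Na)) (hub : ‖ub‖ = 1) (huw : ‖uw‖ = 1)
    (hc : 0 < ‖(⟪uw, ub⟫_ℂ)‖ ^ 2) :
    min (Real.log (1 + 2 * σw ^ 2 * δ ^ 2 * lb /
          (σb ^ 2 * lw * ‖(⟪uw, ub⟫_ℂ)‖ ^ 2 * n)))
        (Real.log (1 + lb * P / σb ^ 2))
      ≤ sSup {r : ℝ | ∃ Q : Matrix (Fin Na) (Fin Na) ℂ, Q.PosSemidef ∧
          (Q.trace).re ≤ P ∧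
          Real.log ((1 + (σw ^ 2)⁻¹ • (((lw : ℂ) • outer uw) * Q)).det.re) ≤ 2 * δ ^ 2 / n ∧
          r = Rfun σb ((lb : ℂ) • outer ub) Q} := by
  set c : ℝ := ‖(⟪uw, ub⟫_ℂ)‖ ^ 2 with hcdef
  have hn' : (0:ℝ) < n := by exact_mod_cast hn
  set q : ℝ := 2 * σw ^ 2 * δ ^ 2 / (lw * c * n) with hqdef
  have hq : 0 < q := by positivity
  set p : ℝ := min P q with hpdef
  have hp : 0 < p := lt_min hP hq
  have hpP : p ≤ P := min_le_left _ _
  have hpq : p ≤ q := min_le_right _ _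
  set Q₀ : Matrix (Fin Na) (Fin Na) ℂ := ((p : ℂ)) • outer ub with hQ₀
  -- quadratic forms of Q₀
  have hform : ∀ v : EuclideanSpace ℂ (Fin Na),
      star (v : Fin Na → ℂ) ⬝ᵥ (Q₀ *ᵥ v)
        = (p : ℂ) * ((star (v : Fin Na → ℂ) ⬝ᵥ (ub : Fin Na → ℂ))
            * (star (ub : Fin Na → ℂ) ⬝ᵥ (v : Fin Na → ℂ))) := by
    intro v
    rw [hQ₀, Matrix.smul_mulVec, dotProduct_smul, outer_mulVec, dotProduct_smul]
    simp only [smul_eq_mul]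
    ring
  -- inner products as dot products
  have hww : (star (uw : Fin Na → ℂ) ⬝ᵥ (ub : Fin Na → ℂ))
      * (star (ub : Fin Na → ℂ) ⬝ᵥ (uw : Fin Na → ℂ)) = (c : ℂ) := by
    rw [← inner_eq_dot, ← inner_eq_dot, ← inner_conj_symm ub uw, Complex.mul_conj']
    norm_cast
  have hbb : (star (ub : Fin Na → ℂ) ⬝ᵥ (ub : Fin Na → ℂ)) = 1 := by
    rw [← inner_eq_dot, inner_self_eq_norm_sq_to_K, hub]
    norm_num
  -- the candidate rate
  set r : ℝ := Real.log (1 + (σb ^ 2)⁻¹ * lb * p) with hrdef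
  -- membership
  have hmem : r ∈ {r : ℝ | ∃ Q : Matrix (Fin Na) (Fin Na) ℂ, Q.PosSemidef ∧
      (Q.trace).re ≤ P ∧
      Real.log ((1 + (σw ^ 2)⁻¹ • (((lw : ℂ) • outer uw) * Q)).det.re) ≤ 2 * δ ^ 2 / n ∧
      r = Rfun σb ((lb : ℂ) • outer ub) Q} := by
    refine ⟨Q₀, posSemidef_real_smul (outer_posSemidef ub) hp.le, ?_, ?_, ?_⟩
    · -- trace
      have : Q₀.trace = (p : ℂ) := by
        rw [hQ₀, Matrix.trace_smul, Matrix.trace]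
        have : (outer ub).diag = fun i => ub i * star (ub i) := rfl
        simp only [this]
        have hsum : ∑ i, ub i * star (ub i) = star (ub : Fin Na → ℂ) ⬝ᵥ (ub : Fin Na → ℂ) := by
          simp [dotProduct, mul_comm]
        rw [hsum, hbb, smul_eq_mul, mul_one]
      rw [this, Complex.ofReal_re]
      exact hpP
    · -- covertness
      have hdet : (1 + (σw ^ 2)⁻¹ • (((lw : ℂ) • outer uw) * Q₀)).det
          = 1 + (((σw ^ 2)⁻¹ * lw : ℝ) : ℂ) * ((p : ℂ) * (c : ℂ)) := by
        rw [real_smul_helper, det_one_add_smul_outer_mul, hform uw, hww]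
      have hre : (1 + (σw ^ 2)⁻¹ • (((lw : ℂ) • outer uw) * Q₀)).det.re
          = 1 + (σw ^ 2)⁻¹ * lw * (p * c) := by
        rw [hdet]
        have h3 : (((σw ^ 2)⁻¹ * lw : ℝ) : ℂ) * ((p : ℂ) * (c : ℂ))
            = (((σw ^ 2)⁻¹ * lw * (p * c) : ℝ) : ℂ) := by push_cast; ring
        rw [h3, Complex.add_re, Complex.one_re, Complex.ofReal_re]
      rw [hre]
      have hx : (σw ^ 2)⁻¹ * lw * (p * c) ≤ 2 * δ ^ 2 / n := by
        have h1 : p * (lw * c) ≤ q * (lw * c) := by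
          apply mul_le_mul_of_nonneg_right hpq
          positivity
        have h2 : q * (lw * c) = 2 * σw ^ 2 * δ ^ 2 / n := by
          rw [hqdef]; field_simp
        calc (σw ^ 2)⁻¹ * lw * (p * c) = (σw ^ 2)⁻¹ * (p * (lw * c)) := by ring
          _ ≤ (σw ^ 2)⁻¹ * (q * (lw * c)) :=
              mul_le_mul_of_nonneg_left h1 (by positivity)
          _ = (σw ^ 2)⁻¹ * (2 * σw ^ 2 * δ ^ 2 / n) := by rw [h2]
          _ = 2 * δ ^ 2 / n := by field_simp
      calc Real.log (1 + (σw ^ 2)⁻¹ * lw * (p * c))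
          ≤ (1 + (σw ^ 2)⁻¹ * lw * (p * c)) - 1 :=
            Real.log_le_sub_one_of_pos (by positivity)
        _ = (σw ^ 2)⁻¹ * lw * (p * c) := by ring
        _ ≤ 2 * δ ^ 2 / n := hx
    · -- rate value
      rw [Rfun, real_smul_helper, det_one_add_smul_outer_mul, hform ub, hbb, hrdef]
      have h3 : (1 + (((σb ^ 2)⁻¹ * lb : ℝ) : ℂ) * ((p : ℂ) * (1 * 1)) : ℂ)
          = ((1 + (σb ^ 2)⁻¹ * lb * p : ℝ) : ℂ) := by push_cast; ring
      rw [h3, Complex.ofReal_re]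
  -- bounded above
  have hbdd : BddAbove {r : ℝ | ∃ Q : Matrix (Fin Na) (Fin Na) ℂ, Q.PosSemidef ∧
      (Q.trace).re ≤ P ∧
      Real.log ((1 + (σw ^ 2)⁻¹ • (((lw : ℂ) • outer uw) * Q)).det.re) ≤ 2 * δ ^ 2 / n ∧
      r = Rfun σb ((lb : ℂ) • outer ub) Q} := by
    refine ⟨Real.log (1 + (σb ^ 2)⁻¹ * lb * P), ?_⟩
    rintro x ⟨Q, hQpsd, hQtr, -, rfl⟩
    rw [Rfun, real_smul_helper, det_one_add_smul_outer_mul]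
    set d : ℂ := star (ub : Fin Na → ℂ) ⬝ᵥ (Q *ᵥ ub) with hd
    have hd0 : 0 ≤ d := hQpsd.dotProduct_mulVec_nonneg _
    have hd0' : 0 ≤ d.re := by
      rw [Complex.le_def] at hd0
      simpa using hd0.1
    have hdP : d.re ≤ P := le_trans (dot_le_trace hQpsd ub hub) hQtr
    have hre : (1 + (((σb ^ 2)⁻¹ * lb : ℝ) : ℂ) * d).re = 1 + (σb ^ 2)⁻¹ * lb * d.re := by
      rw [Complex.add_re, Complex.one_re, Complex.re_ofReal_mul]
    rw [hre]
    apply Real.log_le_log (by positivity)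
    have : (σb ^ 2)⁻¹ * lb * d.re ≤ (σb ^ 2)⁻¹ * lb * P := by
      apply mul_le_mul_of_nonneg_left hdP (by positivity)
    linarith
  refine le_trans ?_ (le_csSup hbdd hmem)
  -- min of the two targets ≤ r
  rcases le_total P q with h | h
  · have hpeq : p = P := min_eq_left h
    refine le_trans (min_le_right _ _) ?_
    rw [hrdef, hpeq]
    apply le_of_eq
    congr 1
    ring
  · have hpeq : p = q := min_eq_right h
    refine le_trans (min_le_left _ _) ?_
    rw [hrdef, hpeq, hqdef]
    apply le_of_eq
    congr 1
    field_simp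
end

section
/- Probability of achieving full covert capacity in the massive MIMO limit (Theorem 8, eq. (70), real-sphere form): There exists a universal constant K > 0 with the following property. Let N_a ≥ 2 and n ≥ 1 be integers, σ_w, λ_w, δ, P > 0 real numbers with t := √2·σ_w²·δ/(√n·λ_w·P) ∈ (0, 1), let u_b be a fixed unit vector in ℝ^{N_a}, and let u_w be distributed according to the uniform (rotation-invariant) probability measure on the unit sphere of ℝ^{N_a}. Then the probability of the event { u_w : ⟨u_b, u_w⟩² ≤ t } — the event on which, by the full-power feasibility threshold, the full-power covariance Q₀ = P·u_b u_bᵀ satisfies the covertness constraint n·D(λ_w·u_w u_wᵀ, Q₀) ≤ 2δ² — is at least 1 − K·√N_a·(1 − t)^{(N_a − 2)/2}. -/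
open Matrix MeasureTheory Real
open scoped InnerProductSpace ENNReal

/-- The detection (relative-entropy) functional at Willie, real-matrix form:
`D(W, Q) = log det (1 + σ_w⁻² W Q) + (1 + σ_w⁻² W Q)⁻¹.trace − N_a`. -/
noncomputable def Dreal {Na : ℕ} (σw : ℝ) (W Q : Matrix (Fin Na) (Fin Na) ℝ) : ℝ :=
  Real.log ((1 + (σw ^ 2)⁻¹ • (W * Q)).det)
    + ((1 + (σw ^ 2)⁻¹ • (W * Q))⁻¹).trace - Na

lemma vMv_mul_vMv {N : ℕ} (u v w z : Fin N → ℝ) :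
    vecMulVec u v * vecMulVec w z = (v ⬝ᵥ w) • vecMulVec u z := by
  ext i j
  simp only [vecMulVec_apply, mul_apply, Matrix.smul_apply, dotProduct, smul_eq_mul, Finset.sum_mul]
  exact Finset.sum_congr rfl fun k _ => by ring

lemma smul_vecMulVec {N : ℕ} (c : ℝ) (u v : Fin N → ℝ) :
    c • vecMulVec u v = vecMulVec (c • u) v := by
  ext i j; simp [vecMulVec_apply, mul_assoc]

lemma Dreal_eq {Na : ℕ} (σw lw P : ℝ) (u b : Fin Na → ℝ)
    (hx : 0 ≤ (σw ^ 2)⁻¹ * (lw * P) * (u ⬝ᵥ b) ^ 2) :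
    Dreal σw (lw • vecMulVec u u) (P • vecMulVec b b)
      = Real.log (1 + (σw ^ 2)⁻¹ * (lw * P) * (u ⬝ᵥ b) ^ 2)
        - ((σw ^ 2)⁻¹ * (lw * P) * (u ⬝ᵥ b) ^ 2)
            / (1 + (σw ^ 2)⁻¹ * (lw * P) * (u ⬝ᵥ b) ^ 2) := by
  set x : ℝ := (σw ^ 2)⁻¹ * (lw * P) * (u ⬝ᵥ b) ^ 2 with hxdef
  set c : ℝ := (σw ^ 2)⁻¹ * (lw * P * (u ⬝ᵥ b)) with hcdef
  have h1x : (0:ℝ) < 1 + x := by linarith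
  have hM : (σw ^ 2)⁻¹ • ((lw • vecMulVec u u) * (P • vecMulVec b b)) = c • vecMulVec u b := by
    rw [Matrix.smul_mul, Matrix.mul_smul, vMv_mul_vMv, smul_smul, smul_smul, smul_smul, hcdef]
    congr 1; ring
  have hcx : c * (b ⬝ᵥ u) = x := by
    rw [hcdef, hxdef, dotProduct_comm b u]; ring
  have hdet : (1 + (σw ^ 2)⁻¹ • ((lw • vecMulVec u u) * (P • vecMulVec b b))).det = 1 + x := by
    rw [hM, smul_vecMulVec, vecMulVec_eq (Fin 1), det_one_add_replicateCol_mul_replicateRow]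
    rw [dotProduct_smul, smul_eq_mul, dotProduct_comm b u, hcdef, hxdef]; ring
  set d : ℝ := c / (1 + x) with hddef
  have hdc : d * (1 + x) = c := div_mul_cancel₀ c (ne_of_gt h1x)
  have hc2 : c = d + c * (d * (b ⬝ᵥ u)) := by
    rw [← hcx] at hdc; linear_combination -hdc
  have hVV : vecMulVec u b * vecMulVec u b = (b ⬝ᵥ u) • vecMulVec u b := vMv_mul_vMv u b u b
  have hinv : (1 + (σw ^ 2)⁻¹ • ((lw • vecMulVec u u) * (P • vecMulVec b b)))⁻¹
      = 1 - d • vecMulVec u b := by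
    apply Matrix.inv_eq_right_inv
    rw [hM, mul_sub, mul_one]
    have h5 : (1 + c • vecMulVec u b) * (d • vecMulVec u b)
        = d • vecMulVec u b + (d * (c * (b ⬝ᵥ u))) • vecMulVec u b := by
      rw [Matrix.mul_smul, add_mul, one_mul, Matrix.smul_mul, hVV, smul_smul, smul_add,
        smul_smul]
    rw [h5]
    nth_rewrite 1 [hc2]
    rw [add_smul]
    have h6 : d * (c * (b ⬝ᵥ u)) = c * (d * (b ⬝ᵥ u)) := by ring
    rw [h6]
    abel
  have htr : (1 - d • vecMulVec u b).trace = (Na : ℝ) - x / (1 + x) := by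
    rw [Matrix.trace_sub, Matrix.trace_smul, Matrix.trace_one, Fintype.card_fin]
    have : (vecMulVec u b).trace = u ⬝ᵥ b := by
      simp [Matrix.trace, Matrix.diag, vecMulVec_apply, dotProduct]
    rw [this]
    have : d • (u ⬝ᵥ b) = x / (1 + x) := by
      rw [hddef, smul_eq_mul, dotProduct_comm u b, div_mul_eq_mul_div, hcx]
    rw [this]
  rw [Dreal, hdet, hinv, htr]
  ring

lemma part1 {Na n : ℕ} (hn : 1 ≤ n) {σw lw δ P t : ℝ} (hσ : 0 < σw) (hl : 0 < lw)
    (hδ : 0 < δ) (hP : 0 < P)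
    (ht : t = Real.sqrt 2 * σw ^ 2 * δ / (Real.sqrt n * lw * P))
    (u b : Fin Na → ℝ) (hub : (u ⬝ᵥ b) ^ 2 ≤ t) :
    (n : ℝ) * Dreal σw (lw • vecMulVec u u) (P • vecMulVec b b) ≤ 2 * δ ^ 2 := by
  set x : ℝ := (σw ^ 2)⁻¹ * (lw * P) * (u ⬝ᵥ b) ^ 2 with hxdef
  have hx : 0 ≤ x := by positivity
  have h1x : (0:ℝ) < 1 + x := by linarith
  rw [Dreal_eq σw lw P u b hx]
  have hlog : Real.log (1 + x) ≤ x := by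
    have := Real.log_le_sub_one_of_pos h1x
    linarith
  have hD : Real.log (1 + x) - x / (1 + x) ≤ x ^ 2 := by
    have h2 : x - x / (1 + x) = x ^ 2 / (1 + x) := by field_simp; ring
    have h3 : x ^ 2 / (1 + x) ≤ x ^ 2 := by
      apply div_le_self (by positivity) (by linarith)
    linarith
  have hsn : (0:ℝ) < Real.sqrt n := Real.sqrt_pos.mpr (by exact_mod_cast hn)
  have hxt : x ≤ Real.sqrt 2 * δ / Real.sqrt n := by
    have : x ≤ (σw ^ 2)⁻¹ * (lw * P) * t := by
      apply mul_le_mul_of_nonneg_left hub (by positivity)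
    rw [ht] at this
    have heq : (σw ^ 2)⁻¹ * (lw * P) * (Real.sqrt 2 * σw ^ 2 * δ / (Real.sqrt n * lw * P))
        = Real.sqrt 2 * δ / Real.sqrt n := by
      field_simp
    rw [heq] at this; exact this
  have hx2 : x ^ 2 ≤ 2 * δ ^ 2 / (n : ℝ) := by
    have h0 : (0:ℝ) ≤ Real.sqrt 2 * δ / Real.sqrt n := by positivity
    have := pow_le_pow_left₀ hx hxt 2
    calc x ^ 2 ≤ (Real.sqrt 2 * δ / Real.sqrt n) ^ 2 := this
      _ = 2 * δ ^ 2 / (n : ℝ) := by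
          rw [div_pow, mul_pow, Real.sq_sqrt (by norm_num : (0:ℝ) ≤ 2),
            Real.sq_sqrt (by positivity : (0:ℝ) ≤ (n:ℝ))]
  have hn0 : (0:ℝ) < n := by exact_mod_cast hn
  calc (n : ℝ) * (Real.log (1 + x) - x / (1 + x)) ≤ (n : ℝ) * x ^ 2 :=
        mul_le_mul_of_nonneg_left hD (le_of_lt hn0)
    _ ≤ (n : ℝ) * (2 * δ ^ 2 / (n : ℝ)) := mul_le_mul_of_nonneg_left hx2 (le_of_lt hn0)
    _ = 2 * δ ^ 2 := by field_simp

variable {m : ℕ}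

lemma gauss_lintegral (c : Fin m → ℝ) (hc : ∀ i, 0 < c i) :
    ∫⁻ x : EuclideanSpace ℝ (Fin m), ENNReal.ofReal (Real.exp (-∑ i, c i * x i ^ 2))
      = ENNReal.ofReal (∏ i, Real.sqrt (π / c i)) := by
  have hmp := EuclideanSpace.volume_preserving_symm_measurableEquiv_toLp (Fin m)
  have hG : Measurable fun y : Fin m → ℝ => ENNReal.ofReal (Real.exp (-∑ i, c i * y i ^ 2)) := by
    apply ENNReal.measurable_ofReal.comp
    apply (Real.continuous_exp.comp ?_).measurable
    exact (continuous_finset_sum _ fun i _ =>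
      (continuous_const.mul ((continuous_apply i).pow 2))).neg
  have step1 : ∫⁻ x : EuclideanSpace ℝ (Fin m),
      ENNReal.ofReal (Real.exp (-∑ i, c i * x i ^ 2))
      = ∫⁻ y : Fin m → ℝ, ENNReal.ofReal (Real.exp (-∑ i, c i * y i ^ 2)) :=
    hmp.lintegral_comp hG
  rw [step1]
  have hint : ∀ i : Fin m, Integrable (fun x : ℝ => Real.exp (-(c i * x ^ 2))) := by
    intro i
    simpa [neg_mul] using integrable_exp_neg_mul_sq (hc i)
  have hprodeq : ∀ y : Fin m → ℝ,
      Real.exp (-∑ i, c i * y i ^ 2) = ∏ i, Real.exp (-(c i * y i ^ 2)) := by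
    intro y
    rw [← Real.exp_sum, ← Finset.sum_neg_distrib]
  have hprodint : Integrable (fun y : Fin m → ℝ => ∏ i, Real.exp (-(c i * y i ^ 2))) :=
    Integrable.fintype_prod fun i => hint i
  have hnn : 0 ≤ᵐ[(volume : Measure (Fin m → ℝ))]
      fun y : Fin m → ℝ => ∏ i, Real.exp (-(c i * y i ^ 2)) := by
    filter_upwards with y
    exact Finset.prod_nonneg fun i _ => (Real.exp_pos _).le
  calc ∫⁻ y : Fin m → ℝ, ENNReal.ofReal (Real.exp (-∑ i, c i * y i ^ 2))
      = ∫⁻ y : Fin m → ℝ, ENNReal.ofReal (∏ i, Real.exp (-(c i * y i ^ 2))) := by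
        simp_rw [hprodeq]
    _ = ENNReal.ofReal (∫ y : Fin m → ℝ, ∏ i, Real.exp (-(c i * y i ^ 2))) :=
        (ofReal_integral_eq_lintegral_ofReal hprodint hnn).symm
    _ = ENNReal.ofReal (∏ i, ∫ x : ℝ, Real.exp (-(c i * x ^ 2))) := by
        exact congrArg ENNReal.ofReal (MeasureTheory.integral_fintype_prod_eq_prod (ι := Fin m) (fun i (x : ℝ) => Real.exp (-(c i * x ^ 2))))
    _ = ENNReal.ofReal (∏ i, Real.sqrt (π / c i)) := by
        congr 1
        exact Finset.prod_congr rfl fun i _ => by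
          rw [← integral_gaussian (c i)]
          congr 1; funext x; rw [neg_mul]

noncomputable def gaussE (m : ℕ) : Measure (EuclideanSpace ℝ (Fin m)) :=
  volume.withDensity (fun x => ENNReal.ofReal (Real.exp (-(‖x‖ ^ 2) / 2)))

lemma dens_meas (m : ℕ) :
    Measurable (fun x : EuclideanSpace ℝ (Fin m) => ENNReal.ofReal (Real.exp (-(‖x‖ ^ 2) / 2))) :=
  ENNReal.measurable_ofReal.comp
    (Real.continuous_exp.comp (((continuous_norm.pow 2).neg).div_const 2)).measurable

lemma norm_sq_eq {m : ℕ} (x : EuclideanSpace ℝ (Fin m)) : ‖x‖ ^ 2 = ∑ i, x i ^ 2 := by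
  rw [EuclideanSpace.norm_eq, Real.sq_sqrt (by positivity)]
  exact Finset.sum_congr rfl fun i _ => by rw [Real.norm_eq_abs, sq_abs]

lemma gaussE_univ (m : ℕ) :
    gaussE m Set.univ = ENNReal.ofReal (Real.sqrt (2 * π) ^ m) := by
  rw [gaussE, withDensity_apply _ MeasurableSet.univ, Measure.restrict_univ]
  have h1 : ∀ x : EuclideanSpace ℝ (Fin m),
      -(‖x‖ ^ 2) / 2 = -∑ i, (fun _ : Fin m => (1/2 : ℝ)) i * x i ^ 2 := by
    intro x
    rw [norm_sq_eq, neg_div, Finset.sum_div, ← Finset.sum_neg_distrib, ← Finset.sum_neg_distrib]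
    exact Finset.sum_congr rfl fun i _ => by ring
  simp_rw [h1]
  rw [gauss_lintegral (fun _ => (1/2 : ℝ)) (fun _ => by norm_num)]
  have h2 : π / (1/2 : ℝ) = 2 * π := by ring
  rw [h2, Finset.prod_const, Finset.card_univ, Fintype.card_fin]

lemma gaussE_map (m : ℕ) (f : EuclideanSpace ℝ (Fin m) ≃ₗᵢ[ℝ] EuclideanSpace ℝ (Fin m)) :
    Measure.map f (gaussE m) = gaussE m := by
  ext s hs
  rw [Measure.map_apply f.continuous.measurable hs, gaussE,
    withDensity_apply _ (f.continuous.measurable hs), withDensity_apply _ hs]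
  have h1 : ∀ x : EuclideanSpace ℝ (Fin m),
      ENNReal.ofReal (Real.exp (-(‖x‖ ^ 2) / 2))
        = ENNReal.ofReal (Real.exp (-(‖f x‖ ^ 2) / 2)) := by
    intro x; rw [f.norm_map]
  calc ∫⁻ x in ⇑f ⁻¹' s, ENNReal.ofReal (Real.exp (-(‖x‖ ^ 2) / 2))
      = ∫⁻ x in ⇑f ⁻¹' s, ENNReal.ofReal (Real.exp (-(‖f x‖ ^ 2) / 2)) := by
        exact lintegral_congr fun x => h1 x
    _ = ∫⁻ y in s, ENNReal.ofReal (Real.exp (-(‖y‖ ^ 2) / 2)) := by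
        exact f.measurePreserving.setLIntegral_comp_preimage_emb
          f.toHomeomorph.toMeasurableEquiv.measurableEmbedding
          (fun y => ENNReal.ofReal (Real.exp (-(‖y‖ ^ 2) / 2))) s

lemma gaussE_zero (m : ℕ) (hm : 1 ≤ m) : gaussE m {0} = 0 := by
  haveI : Nontrivial (EuclideanSpace ℝ (Fin m)) := by
    apply nontrivial_of_ne (EuclideanSpace.single ⟨0, hm⟩ (1:ℝ)) 0
    intro h
    have := congr_fun (congrArg (fun v : EuclideanSpace ℝ (Fin m) => (v : Fin m → ℝ)) h) ⟨0, hm⟩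
    simp [EuclideanSpace.single_apply] at this
  rw [gaussE, withDensity_apply _ (measurableSet_singleton 0)]
  rw [Measure.restrict_eq_zero.mpr (measure_singleton 0), lintegral_zero_measure]

lemma exists_isometry {m : ℕ} (a b : EuclideanSpace ℝ (Fin m)) (h : ‖a‖ = ‖b‖) :
    ∃ f : EuclideanSpace ℝ (Fin m) ≃ₗᵢ[ℝ] EuclideanSpace ℝ (Fin m), f a = b :=
  ⟨Submodule.reflection (ℝ ∙ (a - b))ᗮ, Submodule.reflection_sub h⟩

lemma gauss_tail {Na : ℕ} (hNa : 2 ≤ Na) (i0 : Fin Na) {t : ℝ} (ht0 : 0 < t) (ht1 : t < 1) :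
    gaussE Na {g : EuclideanSpace ℝ (Fin Na) | t * ‖g‖ ^ 2 < (g i0) ^ 2}
      ≤ ENNReal.ofReal (Real.sqrt (2 * π * Na)
          * Real.sqrt (2 * π * (1 - t) / (1 - t / Na)) ^ (Na - 1)) := by
  set lam : ℝ := (1 - 1 / Na) / (2 * (1 - t)) with hlam
  have hNa0 : (0:ℝ) < Na := by positivity
  have hNa1 : (1:ℝ) ≤ Na := by exact_mod_cast le_trans one_le_two hNa
  have h1t : (0:ℝ) < 1 - t := by linarith
  have hlam_pos : 0 < lam := by
    apply div_pos _ (by linarith)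
    have h2 : (2:ℝ) ≤ Na := by exact_mod_cast hNa
    have : 1 / (Na:ℝ) ≤ 1 / 2 := one_div_le_one_div_of_le two_pos h2
    linarith
  set c : Fin Na → ℝ := fun i => (1/2 + lam * t) - (if i = i0 then lam else 0) with hcdef
  have hci0 : c i0 = 1 / (2 * Na) := by
    simp only [hcdef, if_pos rfl, if_true]
    rw [hlam]; field_simp; ring
  have hcother : ∀ i, i ≠ i0 → c i = 1/2 + lam * t := by
    intro i hi; simp only [hcdef, if_neg hi, sub_zero]
  have hcother' : (1/2 + lam * t : ℝ) = (1 - t / Na) / (2 * (1 - t)) := by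
    rw [hlam]; field_simp; ring
  have hcpos : ∀ i, 0 < c i := by
    intro i
    by_cases hi : i = i0
    · rw [hi, hci0]; positivity
    · rw [hcother i hi]; positivity
  have hsum : ∀ x : EuclideanSpace ℝ (Fin Na),
      ∑ i, c i * x i ^ 2 = ‖x‖ ^ 2 / 2 - lam * (x i0 ^ 2 - t * ‖x‖ ^ 2) := by
    intro x
    have h1 : ∑ i, c i * x i ^ 2
        = ∑ i, ((1/2 + lam * t) * x i ^ 2) - ∑ i, (if i = i0 then lam else 0) * x i ^ 2 := by
      rw [← Finset.sum_sub_distrib]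
      exact Finset.sum_congr rfl fun i _ => by rw [hcdef]; ring
    have h2 : ∑ i, (if i = i0 then lam else 0) * x i ^ 2 = lam * x i0 ^ 2 := by
      rw [Finset.sum_eq_single i0]
      · rw [if_pos rfl]
      · intro i _ hi; rw [if_neg hi, zero_mul]
      · intro h; exact absurd (Finset.mem_univ i0) h
    rw [h1, h2, ← Finset.mul_sum, ← norm_sq_eq]
    ring
  set B : Set (EuclideanSpace ℝ (Fin Na)) := {g | t * ‖g‖ ^ 2 < (g i0) ^ 2} with hBdef
  have hBmeas : MeasurableSet B := by
    apply measurableSet_lt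
    · exact (continuous_const.mul (continuous_norm.pow 2)).measurable
    · exact (((EuclideanSpace.proj i0).continuous).pow 2).measurable
  have key : gaussE Na B ≤ ∫⁻ x : EuclideanSpace ℝ (Fin Na),
      ENNReal.ofReal (Real.exp (-∑ i, c i * x i ^ 2)) := by
    rw [gaussE, withDensity_apply _ hBmeas]
    have hGmeas : Measurable fun x : EuclideanSpace ℝ (Fin Na) =>
        ENNReal.ofReal (Real.exp (-∑ i, c i * x i ^ 2)) := by
      apply ENNReal.measurable_ofReal.comp
      apply (Real.continuous_exp.comp ?_).measurable
      exact (continuous_finset_sum _ fun i _ =>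
        (continuous_const.mul (((EuclideanSpace.proj i).continuous).pow 2))).neg
    refine le_trans (setLIntegral_mono hGmeas ?_) (setLIntegral_le_lintegral _ _)
    intro x hx
    apply ENNReal.ofReal_le_ofReal
    apply Real.exp_le_exp.mpr
    rw [hsum x]
    have hx' : 0 < x i0 ^ 2 - t * ‖x‖ ^ 2 := by
      rw [hBdef] at hx; simp only [Set.mem_setOf_eq] at hx; linarith
    nlinarith [mul_pos hlam_pos hx']
  rw [gauss_lintegral c hcpos] at key
  refine le_trans key (ENNReal.ofReal_le_ofReal ?_)
  have hsplit : ∏ i, Real.sqrt (π / c i)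
      = Real.sqrt (π / c i0) * Real.sqrt (π / (1/2 + lam * t)) ^ (Na - 1) := by
    rw [← Finset.mul_prod_erase Finset.univ _ (Finset.mem_univ i0)]
    congr 1
    rw [Finset.prod_congr rfl (fun i hi => by
      rw [hcother i (Finset.mem_erase.mp hi).1]), Finset.prod_const,
      Finset.card_erase_of_mem (Finset.mem_univ i0), Finset.card_univ, Fintype.card_fin]
  rw [hsplit, hci0, hcother']
  have e1 : π / (1 / (2 * (Na:ℝ))) = 2 * π * Na := by field_simp
  have e2 : π / ((1 - t / Na) / (2 * (1 - t))) = 2 * π * (1 - t) / (1 - t / Na) := by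
    have hb : (0:ℝ) < 1 - t / Na := by
      have : t / Na < 1 := by
        rw [div_lt_one hNa0]; linarith
      linarith
    field_simp
  rw [e1, e2]

lemma swap_identity {Na : ℕ} (hNa : 2 ≤ Na) (i0 : Fin Na) {t : ℝ} (ht0 : 0 < t)
    (ub : EuclideanSpace ℝ (Fin Na)) (hub : ‖ub‖ = 1)
    (μ : Measure (EuclideanSpace ℝ (Fin Na))) [IsProbabilityMeasure μ]
    (hsph : μ (Metric.sphere (0 : EuclideanSpace ℝ (Fin Na)) 1) = 1)
    (hinv : ∀ f : EuclideanSpace ℝ (Fin Na) ≃ₗᵢ[ℝ] EuclideanSpace ℝ (Fin Na),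
      Measure.map f μ = μ) :
    μ {u : EuclideanSpace ℝ (Fin Na) | t * ‖u‖ ^ 2 < ⟪ub, u⟫_ℝ ^ 2} * gaussE Na Set.univ
      = gaussE Na {g : EuclideanSpace ℝ (Fin Na) | t * ‖g‖ ^ 2 < (g i0) ^ 2} := by
  haveI : IsFiniteMeasure (gaussE Na) := by
    constructor; rw [gaussE_univ]; exact ENNReal.ofReal_lt_top
  set e1 : EuclideanSpace ℝ (Fin Na) := EuclideanSpace.single i0 (1:ℝ) with he1
  have he1norm : ‖e1‖ = 1 := by rw [he1, EuclideanSpace.norm_single, norm_one]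
  have hinner_e1 : ∀ x : EuclideanSpace ℝ (Fin Na), ⟪e1, x⟫_ℝ = x i0 := by
    intro x; rw [he1, EuclideanSpace.inner_single_left]; simp
  set Bs : Set (EuclideanSpace ℝ (Fin Na)) := {u | t * ‖u‖ ^ 2 < ⟪ub, u⟫_ℝ ^ 2} with hBs
  set Bg : Set (EuclideanSpace ℝ (Fin Na)) := {g | t * ‖g‖ ^ 2 < (g i0) ^ 2} with hBg
  have mset : ∀ (h : EuclideanSpace ℝ (Fin Na) → ℝ), Continuous h →
      MeasurableSet {x : EuclideanSpace ℝ (Fin Na) | t * ‖x‖ ^ 2 < (h x) ^ 2} := by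
    intro h hh
    exact measurableSet_lt (continuous_const.mul (continuous_norm.pow 2)).measurable
      ((hh.pow 2).measurable)
  have hBsmeas : MeasurableSet Bs := mset _ (continuous_const.inner continuous_id)
  have hBgmeas : MeasurableSet Bg := mset _ (EuclideanSpace.proj i0).continuous
  set S : Set (EuclideanSpace ℝ (Fin Na) × EuclideanSpace ℝ (Fin Na)) :=
    {p | t * (‖p.1‖ ^ 2 * ‖p.2‖ ^ 2) < ⟪p.1, p.2⟫_ℝ ^ 2} with hSdef
  have hS : MeasurableSet S := by
    apply measurableSet_lt
    · exact (continuous_const.mul (((continuous_norm.comp continuous_fst).pow 2).mul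
        ((continuous_norm.comp continuous_snd).pow 2))).measurable
    · exact (continuous_inner.pow 2).measurable
  have h1 : (μ.prod (gaussE Na)) S = ∫⁻ u, gaussE Na (Prod.mk u ⁻¹' S) ∂μ :=
    Measure.prod_apply hS
  have h2 : (μ.prod (gaussE Na)) S = ∫⁻ g, μ ((fun u => (u, g)) ⁻¹' S) ∂(gaussE Na) :=
    Measure.prod_apply_symm hS
  -- left side evaluation
  have hae : ∀ᵐ u ∂μ, ‖u‖ = 1 := by
    have hc : μ (Metric.sphere (0:EuclideanSpace ℝ (Fin Na)) 1)ᶜ = 0 := by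
      rw [measure_compl (Metric.isClosed_sphere.measurableSet) (measure_ne_top μ _), hsph,
        measure_univ, tsub_self]
    have : Metric.sphere (0:EuclideanSpace ℝ (Fin Na)) 1 ∈ ae μ := by
      rw [mem_ae_iff]; exact hc
    filter_upwards [this] with u hu
    rwa [mem_sphere_zero_iff_norm] at hu
  have hfix_u : ∀ u : EuclideanSpace ℝ (Fin Na), ‖u‖ = 1 → gaussE Na (Prod.mk u ⁻¹' S) = gaussE Na Bg := by
    intro u hu
    have hpre : Prod.mk u ⁻¹' S
        = {g : EuclideanSpace ℝ (Fin Na) | t * ‖g‖ ^ 2 < ⟪u, g⟫_ℝ ^ 2} := by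
      ext g
      simp only [Set.mem_preimage, hSdef, Set.mem_setOf_eq, hu]
      rw [one_pow, one_mul]
    rw [hpre]
    obtain ⟨f, hf⟩ := exists_isometry e1 u (by rw [he1norm, hu])
    have hmeas' : MeasurableSet {g : EuclideanSpace ℝ (Fin Na) | t * ‖g‖ ^ 2 < ⟪u, g⟫_ℝ ^ 2} :=
      mset _ (continuous_const.inner continuous_id)
    conv_lhs => rw [← gaussE_map Na f]
    rw [Measure.map_apply f.continuous.measurable hmeas']
    congr 1
    ext x
    simp only [Set.mem_preimage, Set.mem_setOf_eq, hBg]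
    rw [← hf, f.inner_map_map, f.norm_map, hinner_e1]
  have hleft : ∫⁻ u, gaussE Na (Prod.mk u ⁻¹' S) ∂μ = gaussE Na Bg := by
    rw [lintegral_congr_ae (hae.mono fun u hu => hfix_u u hu), lintegral_const,
      measure_univ, mul_one]
  -- right side evaluation
  have hae' : ∀ᵐ g ∂(gaussE Na), g ≠ 0 := by
    rw [ae_iff]
    simp only [not_not]
    rw [Set.setOf_eq_eq_singleton]
    exact gaussE_zero Na (le_trans one_le_two hNa)
  have hfix_g : ∀ g : EuclideanSpace ℝ (Fin Na), g ≠ 0 →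
      μ ((fun u => (u, g)) ⁻¹' S) = μ Bs := by
    intro g hg
    have hng : 0 < ‖g‖ := norm_pos_iff.mpr hg
    set v : EuclideanSpace ℝ (Fin Na) := ‖g‖⁻¹ • g with hv
    have hvnorm : ‖v‖ = 1 := norm_smul_inv_norm hg
    have hpre : (fun u => (u, g)) ⁻¹' S
        = {u : EuclideanSpace ℝ (Fin Na) | t * ‖u‖ ^ 2 < ⟪v, u⟫_ℝ ^ 2} := by
      ext u
      simp only [Set.mem_preimage, hSdef, Set.mem_setOf_eq, hv]
      rw [real_inner_smul_left, real_inner_comm g u]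
      rw [mul_pow, inv_pow, inv_mul_eq_div, lt_div_iff₀ (pow_pos hng 2), mul_assoc]
    obtain ⟨f, hf⟩ := exists_isometry v ub (by rw [hvnorm, hub])
    have : f ⁻¹' Bs = {u : EuclideanSpace ℝ (Fin Na) | t * ‖u‖ ^ 2 < ⟪v, u⟫_ℝ ^ 2} := by
      ext x
      simp only [Set.mem_preimage, Set.mem_setOf_eq, hBs]
      rw [← hf, f.inner_map_map, f.norm_map]
    rw [hpre, ← this, ← Measure.map_apply f.continuous.measurable hBsmeas, hinv f]
  have hright : ∫⁻ g, μ ((fun u => (u, g)) ⁻¹' S) ∂(gaussE Na)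
      = μ Bs * gaussE Na Set.univ := by
    rw [lintegral_congr_ae (hae'.mono fun g hg => hfix_g g hg), lintegral_const]
  rw [← hright, ← h2, h1, hleft]

lemma final_ineq {Na : ℕ} (hNa : 2 ≤ Na) {t : ℝ} (ht0 : 0 < t) (ht1 : t < 1) :
    Real.sqrt (2*π*Na) * Real.sqrt (2*π*(1-t)/(1 - t/Na)) ^ (Na-1)
      ≤ 2 * Real.sqrt Na * (1-t) ^ (((Na:ℝ)-2)/2) * Real.sqrt (2*π) ^ Na := by
  obtain ⟨m, rfl⟩ : ∃ m, Na = m + 1 := ⟨Na - 1, by omega⟩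
  have hm1 : 1 ≤ m := by omega
  have hm0 : (0:ℝ) < m := by exact_mod_cast hm1
  set a : ℝ := 1 - t with ha
  have ha0 : 0 < a := by rw [ha]; linarith
  have ha1 : a ≤ 1 := by rw [ha]; linarith
  have hNa0 : (0:ℝ) < ((m:ℝ) + 1) := by positivity
  have hNacast : ((m + 1 : ℕ) : ℝ) = (m:ℝ) + 1 := by push_cast; ring
  set b : ℝ := 1 - t / ((m + 1 : ℕ) : ℝ) with hb
  have hble : (m:ℝ)/((m:ℝ)+1) ≤ b := by
    rw [hb, hNacast]
    have h9 : t / ((m:ℝ)+1) ≤ 1 / ((m:ℝ)+1) := by gcongr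
    have h10 : (m:ℝ)/((m:ℝ)+1) = 1 - 1/((m:ℝ)+1) := by field_simp; ring
    linarith
  have hb0 : 0 < b := by
    have h11 : (0:ℝ) < (m:ℝ)/((m:ℝ)+1) := by positivity
    exact lt_of_lt_of_le h11 hble
  have h2pi : (0:ℝ) < 2*π := by positivity
  -- key: 1 ≤ 4 * b ^ m
  have hexp1 : Real.exp (-1/(m:ℝ)) ≤ (m:ℝ)/((m:ℝ)+1) := by
    have h1 : 1/(m:ℝ) + 1 ≤ Real.exp (1/(m:ℝ)) := Real.add_one_le_exp _
    have h2 : Real.exp (-1/(m:ℝ)) = (Real.exp (1/(m:ℝ)))⁻¹ := by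
      rw [← Real.exp_neg]; congr 1; ring
    rw [h2]
    have h3 : (Real.exp (1/(m:ℝ)))⁻¹ ≤ (1/(m:ℝ) + 1)⁻¹ := by
      apply inv_anti₀ (by positivity) h1
    refine le_trans h3 (le_of_eq ?_)
    rw [inv_eq_one_div]
    rw [div_eq_div_iff (by positivity) (by positivity)]
    field_simp
    ring
  have hb4 : 1 ≤ 4 * b ^ m := by
    have h5 : Real.exp (-1/(m:ℝ)) ^ m ≤ b ^ m :=
      pow_le_pow_left₀ (Real.exp_nonneg _) (le_trans hexp1 hble) m
    have h6 : Real.exp (-1/(m:ℝ)) ^ m = Real.exp (-1) := by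
      rw [← Real.exp_nat_mul]
      congr 1
      field_simp
    have h7 : (1:ℝ)/4 ≤ Real.exp (-1) := by
      rw [Real.exp_neg]
      have : Real.exp 1 < 4 := lt_trans Real.exp_one_lt_d9 (by norm_num)
      have h8 : (4:ℝ)⁻¹ ≤ (Real.exp 1)⁻¹ := inv_anti₀ (Real.exp_pos 1) this.le
      linarith
    rw [h6] at h5
    linarith
  -- nat-pow inequality
  have hcore_sq : (a/b) ^ m ≤ 4 * a ^ (m - 1) := by
    rw [div_pow, div_le_iff₀ (pow_pos hb0 m)]
    have hpow : a ^ m = a ^ (m-1) * a := by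
      rw [← pow_succ]
      congr 1
      omega
    rw [hpow]
    have : a ^ (m-1) * a ≤ a ^ (m-1) * (4 * b ^ m) := by
      apply mul_le_mul_of_nonneg_left _ (pow_nonneg ha0.le _)
      calc a ≤ 1 := ha1
        _ ≤ 4 * b ^ m := hb4
    calc a ^ (m-1) * a ≤ a ^ (m-1) * (4 * b ^ m) := this
      _ = 4 * a ^ (m-1) * b ^ m := by ring
  -- rpow side
  set e : ℝ := (((m + 1 : ℕ) : ℝ) - 2)/2 with he
  have he' : e = ((m:ℝ) - 1)/2 := by rw [he, hNacast]; ring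
  have hae_pos : 0 < a ^ e := Real.rpow_pos_of_pos ha0 e
  have hsq : ((a/b) ^ m) = (Real.sqrt (a/b) ^ m)^2 := by
    rw [← pow_mul, mul_comm m 2, pow_mul, Real.sq_sqrt (div_nonneg ha0.le hb0.le)]
  have hRsq : (2 * a ^ e)^2 = 4 * a ^ (m - 1) := by
    rw [mul_pow]
    have : (a ^ e)^2 = a ^ ((m:ℝ) - 1) := by
      rw [← Real.rpow_natCast (a ^ e) 2, ← Real.rpow_mul ha0.le, he']
      norm_num
    rw [this]
    have hcast : ((m:ℝ) - 1) = ((m - 1 : ℕ) : ℝ) := by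
      have : ((m - 1 : ℕ) : ℝ) = (m:ℝ) - 1 := by
        push_cast [Nat.cast_sub hm1]
        ring
      linarith [this]
    rw [hcast, Real.rpow_natCast]
    norm_num
  have hcore : Real.sqrt (a/b) ^ m ≤ 2 * a ^ e := by
    have hL : 0 ≤ Real.sqrt (a/b) ^ m := pow_nonneg (Real.sqrt_nonneg _) m
    have hR : 0 ≤ 2 * a ^ e := by positivity
    have hsq2 : (Real.sqrt (a/b) ^ m)^2 ≤ (2 * a ^ e)^2 := by
      rw [← hsq, hRsq]; exact hcore_sq
    calc Real.sqrt (a/b) ^ m = Real.sqrt ((Real.sqrt (a/b) ^ m)^2) :=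
          (Real.sqrt_sq hL).symm
      _ ≤ Real.sqrt ((2 * a ^ e)^2) := Real.sqrt_le_sqrt hsq2
      _ = 2 * a ^ e := Real.sqrt_sq hR
  -- assemble
  have hsplit1 : Real.sqrt (2*π*((m+1:ℕ):ℝ)) = Real.sqrt (2*π) * Real.sqrt ((m+1:ℕ):ℝ) :=
    Real.sqrt_mul h2pi.le _
  have hsplit2 : Real.sqrt (2*π*a/b) = Real.sqrt (2*π) * Real.sqrt (a/b) := by
    rw [mul_div_assoc, Real.sqrt_mul h2pi.le]
  have hmm : m + 1 - 1 = m := by omega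
  rw [hsplit1, hsplit2, hmm, mul_pow, pow_succ]
  have hfinal : Real.sqrt (2*π) * Real.sqrt ((m+1:ℕ):ℝ)
        * (Real.sqrt (2*π) ^ m * Real.sqrt (a/b) ^ m)
      = (Real.sqrt ((m+1:ℕ):ℝ) * Real.sqrt (a/b) ^ m)
        * (Real.sqrt (2*π) ^ m * Real.sqrt (2*π)) := by ring
  rw [hfinal]
  apply mul_le_mul_of_nonneg_right _ (by positivity)
  calc Real.sqrt ((m+1:ℕ):ℝ) * Real.sqrt (a/b) ^ m
      ≤ Real.sqrt ((m+1:ℕ):ℝ) * (2 * a ^ e) :=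
        mul_le_mul_of_nonneg_left hcore (Real.sqrt_nonneg _)
    _ = 2 * Real.sqrt ((m+1:ℕ):ℝ) * a ^ e := by ring

/-- **Probability of achieving full covert capacity in the massive MIMO limit
(Theorem 8, eq. (70), real-sphere form).**  There is a universal constant `K > 0` such that,
with `t = √2·σ_w²·δ/(√n·λ_w·P) ∈ (0,1)`, `u_b` a fixed unit vector, and `u_w` uniform on the
unit sphere of `ℝ^{N_a}`, the event `{u_w : ⟨u_b, u_w⟩² ≤ t}` — on which the full-power
covariance `Q₀ = P u_b u_bᵀ` satisfies the covertness constraint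
`n·D(λ_w u_w u_wᵀ, Q₀) ≤ 2δ²` — has probability at least
`1 − K·√N_a·(1 − t)^{(N_a−2)/2}`. -/
theorem massive_mimo_full_capacity_probability :
    ∃ K : ℝ, 0 < K ∧
      ∀ (Na n : ℕ), 2 ≤ Na → 1 ≤ n →
      ∀ σw lw δ P t : ℝ, 0 < σw → 0 < lw → 0 < δ → 0 < P →
        t = Real.sqrt 2 * σw ^ 2 * δ / (Real.sqrt n * lw * P) → 0 < t → t < 1 →
      ∀ ub : EuclideanSpace ℝ (Fin Na), ‖ub‖ = 1 →
      ∀ μ : Measure (EuclideanSpace ℝ (Fin Na)), IsProbabilityMeasure μ →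
        μ (Metric.sphere (0 : EuclideanSpace ℝ (Fin Na)) 1) = 1 →
        (∀ f : EuclideanSpace ℝ (Fin Na) ≃ₗᵢ[ℝ] EuclideanSpace ℝ (Fin Na),
          Measure.map f μ = μ) →
        (∀ uw : EuclideanSpace ℝ (Fin Na), ‖uw‖ = 1 → ⟪ub, uw⟫_ℝ ^ 2 ≤ t →
          (n : ℝ) * Dreal σw (lw • vecMulVec (uw : Fin Na → ℝ) uw)
              (P • vecMulVec (ub : Fin Na → ℝ) ub) ≤ 2 * δ ^ 2) ∧
        1 - K * Real.sqrt Na * (1 - t) ^ (((Na : ℝ) - 2) / 2)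
          ≤ (μ {uw : EuclideanSpace ℝ (Fin Na) | ⟪ub, uw⟫_ℝ ^ 2 ≤ t}).toReal := by
  refine ⟨2, two_pos, ?_⟩
  intro Na n hNa hn σw lw δ P t hσ hl hδ hP ht ht0 ht1 ub hub μ hprob hsph hinvmap
  have hinner_dot : ∀ uw : EuclideanSpace ℝ (Fin Na),
      ⟪ub, uw⟫_ℝ = (uw : Fin Na → ℝ) ⬝ᵥ (ub : Fin Na → ℝ) := by
    intro uw
    rw [PiLp.inner_apply, dotProduct]
    exact Finset.sum_congr rfl fun i _ => by
      simp [RCLike.inner_apply, starRingEnd_apply, mul_comm]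
  constructor
  · intro uw huw hinner
    apply part1 hn hσ hl hδ hP ht
    rw [← hinner_dot uw] at *
    exact hinner
  · -- probability part
    set A : Set (EuclideanSpace ℝ (Fin Na)) := {uw | ⟪ub, uw⟫_ℝ ^ 2 ≤ t} with hA
    have hAmeas : MeasurableSet A := by
      apply measurableSet_le
      · exact (((continuous_const.inner continuous_id).pow 2)).measurable
      · exact measurable_const
    have hAc : Aᶜ = {uw : EuclideanSpace ℝ (Fin Na) | t < ⟪ub, uw⟫_ℝ ^ 2} := by
      ext u; simp [hA, not_le]
    set Bs : Set (EuclideanSpace ℝ (Fin Na)) := {u | t * ‖u‖ ^ 2 < ⟪ub, u⟫_ℝ ^ 2} with hBs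
    have hBsmeas : MeasurableSet Bs :=
      measurableSet_lt (continuous_const.mul (continuous_norm.pow 2)).measurable
        (((continuous_const.inner continuous_id).pow 2)).measurable
    have i0 : Fin Na := ⟨0, by omega⟩
    have key := swap_identity hNa i0 ht0 ub hub μ hsph hinvmap
    have chern := gauss_tail hNa i0 ht0 ht1
    set Y : ℝ := 2 * Real.sqrt Na * (1 - t) ^ (((Na : ℝ) - 2) / 2) with hY
    have hY0 : 0 ≤ Y := by
      rw [hY]
      have : (0:ℝ) ≤ (1 - t) ^ (((Na : ℝ) - 2) / 2) :=
        Real.rpow_nonneg (by linarith) _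
      positivity
    have hchain : μ Bs * gaussE Na Set.univ
        ≤ ENNReal.ofReal Y * gaussE Na Set.univ := by
      rw [key, gaussE_univ]
      refine le_trans chern ?_
      rw [← ENNReal.ofReal_mul hY0]
      exact ENNReal.ofReal_le_ofReal (final_ineq hNa ht0 ht1)
    have hcancel : μ Bs ≤ ENNReal.ofReal Y := by
      have h0 : gaussE Na Set.univ ≠ 0 := by
        rw [gaussE_univ]
        exact ne_of_gt (ENNReal.ofReal_pos.mpr (by positivity))
      have htop : gaussE Na Set.univ ≠ ⊤ := by
        rw [gaussE_univ]; exact ENNReal.ofReal_ne_top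
      exact (ENNReal.mul_le_mul_iff_left h0 htop).mp hchain
    have hAcBs : μ Aᶜ ≤ μ Bs := by
      have hsub : Aᶜ ∩ Metric.sphere (0 : EuclideanSpace ℝ (Fin Na)) 1 ⊆ Bs := by
        intro u hu
        obtain ⟨hu1, hu2⟩ := hu
        rw [mem_sphere_zero_iff_norm] at hu2
        rw [hAc] at hu1
        simp only [Set.mem_setOf_eq] at hu1
        show t * ‖u‖ ^ 2 < ⟪ub, u⟫_ℝ ^ 2
        rw [hu2]
        simpa using hu1
      have hdiff : μ (Aᶜ \ Metric.sphere (0 : EuclideanSpace ℝ (Fin Na)) 1) = 0 := by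
        have h1 : μ (Metric.sphere (0 : EuclideanSpace ℝ (Fin Na)) 1)ᶜ = 0 := by
          rw [measure_compl Metric.isClosed_sphere.measurableSet (measure_ne_top μ _), hsph,
            measure_univ, tsub_self]
        exact le_antisymm (le_trans (measure_mono (Set.diff_subset_compl _ _)) h1.le) (zero_le)
      calc μ Aᶜ ≤ μ (Aᶜ ∩ Metric.sphere (0 : EuclideanSpace ℝ (Fin Na)) 1)
            + μ (Aᶜ \ Metric.sphere (0 : EuclideanSpace ℝ (Fin Na)) 1) :=
          measure_le_inter_add_diff μ _ _
        _ = μ (Aᶜ ∩ Metric.sphere (0 : EuclideanSpace ℝ (Fin Na)) 1) := by rw [hdiff, add_zero]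
        _ ≤ μ Bs := measure_mono hsub
    have hAcY : (μ Aᶜ).toReal ≤ Y :=
      ENNReal.toReal_le_of_le_ofReal hY0 (le_trans hAcBs hcancel)
    have hsum : (μ A).toReal + (μ Aᶜ).toReal = 1 := by
      rw [← ENNReal.toReal_add (measure_ne_top μ _) (measure_ne_top μ _),
        measure_add_measure_compl hAmeas, measure_univ, ENNReal.toReal_one]
    rw [hY] at hAcY
    linarith
end
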